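/- arXiv:2604.17239 — 7 statements merged into one kernel-verified Lean document; each statement's English description precedes it below -/
import Mathlib

section
/- Let n ≥ 1 and let W_1, …, W_n be nonnegative, identically distributed real-valued random variables on a common probability space satisfying ∑_{i=1}^n W_i = n almost surely. Then for every real x > 0 one has 1 ≤ E[max_{1≤i≤n} W_i] ≤ x + (n/x) · sup_{t ≥ x} t² P(W_1 ≥ t). Equivalently, the quantity a_n := n^{-1/2} E[max_{1≤i≤n} W_i] satisfies n^{-1/2} ≤ a_n ≤ x/√n + (√n/x) · sup_{t ≥ x} t² P(W_1 ≥ t). -/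
open MeasureTheory ProbabilityTheory ENNReal Filter

/-- For nonnegative, identically distributed bootstrap weights
`W_1, …, W_n` summing to `n` almost surely, and any `x > 0`,
`1 ≤ E[max_i W_i] ≤ x + (n/x) · sup_{t ≥ x} t² P(W_1 ≥ t)`. -/
theorem stmt_0 {Ω : Type*} [MeasurableSpace Ω] (μ : Measure Ω) [IsProbabilityMeasure μ]
    (n : ℕ) (hn : 1 ≤ n) (W : Fin n → Ω → ℝ)
    (hmeas : ∀ i, Measurable (W i))
    (hnonneg : ∀ i ω, 0 ≤ W i ω)
    (hident : ∀ i j, IdentDistrib (W i) (W j) μ μ)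
    (hsum : ∀ᵐ ω ∂μ, ∑ i, W i ω = n)
    (x : ℝ) (hx : 0 < x) (i : Fin n) :
    1 ≤ ∫⁻ ω, ENNReal.ofReal (⨆ j, W j ω) ∂μ ∧
      ∫⁻ ω, ENNReal.ofReal (⨆ j, W j ω) ∂μ ≤
        ENNReal.ofReal x + ((n : ℝ≥0∞) / ENNReal.ofReal x) *
          ⨆ t ∈ Set.Ici x, ENNReal.ofReal (t ^ 2) * μ {ω | t ≤ W i ω} := by
  haveI : NeZero n := ⟨by omega⟩
  haveI : Nonempty (Fin n) := ⟨⟨0, hn⟩⟩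
  set M : Ω → ℝ := fun ω => ⨆ j, W j ω with hMdef
  have hMeq : ∀ ω, M ω = Finset.univ.sup' Finset.univ_nonempty (fun j => W j ω) := by
    intro ω; rw [Finset.sup'_univ_eq_ciSup]
  have hW_le_M : ∀ ω j, W j ω ≤ M ω := fun ω j =>
    le_ciSup (f := fun j => W j ω) (Set.Finite.bddAbove (Set.finite_range _)) j
  have hMmeas : Measurable M := by
    have h := Finset.measurable_sup' (Finset.univ_nonempty (α := Fin n))
      (fun j _ => hmeas j)
    have : (Finset.univ.sup' Finset.univ_nonempty W) = M := by
      funext ω; rw [hMeq ω, Finset.sup'_apply]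
    rwa [this] at h
  have hMnonneg : ∀ ω, 0 ≤ M ω := fun ω => (hnonneg i ω).trans (hW_le_M ω i)
  set S := ⨆ t ∈ Set.Ici x, ENNReal.ofReal (t ^ 2) * μ {ω | t ≤ W i ω} with hSdef
  constructor
  · -- lower bound
    have hone : ∀ᵐ ω ∂μ, 1 ≤ M ω := by
      filter_upwards [hsum] with ω hω
      by_contra h
      push_neg at h
      have hlt : ∀ j : Fin n, W j ω < 1 := fun j => lt_of_le_of_lt (hW_le_M ω j) h
      have : ∑ j, W j ω < ∑ _j : Fin n, (1 : ℝ) :=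
        Finset.sum_lt_sum_of_nonempty Finset.univ_nonempty fun j _ => hlt j
      rw [hω] at this
      simp at this
    calc (1 : ℝ≥0∞) = ∫⁻ _, 1 ∂μ := by simp
      _ ≤ ∫⁻ ω, ENNReal.ofReal (M ω) ∂μ := by
          apply lintegral_mono_ae
          filter_upwards [hone] with ω hω
          simpa using ENNReal.one_le_ofReal.mpr hω
  · -- upper bound
    by_cases hS : S = ⊤
    · rw [hS]
      have hne : ((n : ℝ≥0∞) / ENNReal.ofReal x) ≠ 0 := by
        apply ENNReal.div_ne_zero.mpr
        exact ⟨Nat.cast_ne_zero.mpr (by omega), ENNReal.ofReal_ne_top⟩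
      rw [ENNReal.mul_top hne]
      simp
    have hlc : ∫⁻ ω, ENNReal.ofReal (M ω) ∂μ = ∫⁻ t in Set.Ioi 0, μ {ω | t ≤ M ω} :=
      lintegral_eq_lintegral_meas_le μ (ae_of_all _ hMnonneg) hMmeas.aemeasurable
    have hsplit : ∫⁻ t in Set.Ioi (0:ℝ), μ {ω | t ≤ M ω}
        = (∫⁻ t in Set.Ioc 0 x, μ {ω | t ≤ M ω}) + ∫⁻ t in Set.Ioi x, μ {ω | t ≤ M ω} := by
      rw [← lintegral_union measurableSet_Ioi (Set.Ioc_disjoint_Ioi le_rfl),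
        Set.Ioc_union_Ioi_eq_Ioi hx.le]
    have hp1 : ∫⁻ t in Set.Ioc (0:ℝ) x, μ {ω | t ≤ M ω} ≤ ENNReal.ofReal x := by
      calc ∫⁻ t in Set.Ioc (0:ℝ) x, μ {ω | t ≤ M ω}
          ≤ ∫⁻ _ in Set.Ioc (0:ℝ) x, 1 := lintegral_mono fun t => prob_le_one
        _ = ENNReal.ofReal x := by
            rw [setLIntegral_const, Real.volume_Ioc, one_mul, sub_zero]
    have hkey : ∀ t ∈ Set.Ioi x, μ {ω | t ≤ M ω}
        ≤ ((n : ℝ≥0∞) * S) * ENNReal.ofReal ((t ^ 2)⁻¹) := by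
      intro t ht
      have ht0 : 0 < t := hx.trans ht
      have ht2 : (0:ℝ) < t ^ 2 := by positivity
      have hsub : {ω | t ≤ M ω} ⊆ ⋃ j, {ω | t ≤ W j ω} := by
        intro ω hω
        rw [Set.mem_setOf_eq, hMeq ω, Finset.le_sup'_iff] at hω
        obtain ⟨j, -, hj⟩ := hω
        exact Set.mem_iUnion.mpr ⟨j, hj⟩
      have h2 : ∀ j, μ {ω | t ≤ W j ω} = μ {ω | t ≤ W i ω} := by
        intro j
        have := (hident j i).measure_mem_eq (measurableSet_Ici (a := t))
        simpa [Set.preimage, Set.mem_Ici] using this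
      have h1 : μ {ω | t ≤ M ω} ≤ (n : ℝ≥0∞) * μ {ω | t ≤ W i ω} := by
        calc μ {ω | t ≤ M ω} ≤ μ (⋃ j, {ω | t ≤ W j ω}) := measure_mono hsub
          _ ≤ ∑ j, μ {ω | t ≤ W j ω} := measure_iUnion_fintype_le μ _
          _ = (n : ℝ≥0∞) * μ {ω | t ≤ W i ω} := by
              simp [h2, Finset.sum_const]
      have h3 : μ {ω | t ≤ W i ω} ≤ S / ENNReal.ofReal (t ^ 2) := by
        rw [ENNReal.le_div_iff_mul_le
          (Or.inl (by simpa using ht0.ne')) (Or.inl ENNReal.ofReal_ne_top)]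
        rw [mul_comm]
        exact le_biSup (fun t => ENNReal.ofReal (t ^ 2) * μ {ω | t ≤ W i ω}) (Set.mem_Ici.mpr ht.le)
      calc μ {ω | t ≤ M ω} ≤ (n : ℝ≥0∞) * (S / ENNReal.ofReal (t ^ 2)) := by
            exact h1.trans (mul_le_mul_right h3 _)
        _ = ((n : ℝ≥0∞) * S) * ENNReal.ofReal ((t ^ 2)⁻¹) := by
            rw [ENNReal.ofReal_inv_of_pos ht2, div_eq_mul_inv, mul_assoc]
    have hint : ∫⁻ t in Set.Ioi x, ENNReal.ofReal ((t ^ 2)⁻¹) = ENNReal.ofReal x⁻¹ := by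
      have hcongr : ∫⁻ t in Set.Ioi x, ENNReal.ofReal ((t ^ 2)⁻¹)
          = ∫⁻ t in Set.Ioi x, ENNReal.ofReal (t ^ (-2 : ℝ)) := by
        apply setLIntegral_congr_fun measurableSet_Ioi
        intro t ht
        beta_reduce
        have ht0 : 0 < t := hx.trans ht
        rw [Real.rpow_neg ht0.le, ← Real.rpow_natCast t 2]
        norm_num
      have hnn : 0 ≤ᵐ[volume.restrict (Set.Ioi x)] fun t : ℝ => t ^ (-2 : ℝ) := by
        rw [EventuallyLE, ae_restrict_iff' measurableSet_Ioi]
        exact ae_of_all _ fun t ht => Real.rpow_nonneg (hx.trans ht).le _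
      rw [hcongr, ← ofReal_integral_eq_lintegral_ofReal
        (integrableOn_Ioi_rpow_of_lt (by norm_num) hx) hnn,
        integral_Ioi_rpow_of_lt (by norm_num) hx]
      norm_num [Real.rpow_neg_one]
    have hp2 : ∫⁻ t in Set.Ioi x, μ {ω | t ≤ M ω}
        ≤ ((n : ℝ≥0∞) / ENNReal.ofReal x) * S := by
      calc ∫⁻ t in Set.Ioi x, μ {ω | t ≤ M ω}
          ≤ ∫⁻ t in Set.Ioi x, ((n : ℝ≥0∞) * S) * ENNReal.ofReal ((t ^ 2)⁻¹) :=
            setLIntegral_mono' measurableSet_Ioi hkey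
        _ = ((n : ℝ≥0∞) * S) * ∫⁻ t in Set.Ioi x, ENNReal.ofReal ((t ^ 2)⁻¹) :=
            lintegral_const_mul' _ _ (ENNReal.mul_ne_top (ENNReal.natCast_ne_top n) hS)
        _ = ((n : ℝ≥0∞) * S) * ENNReal.ofReal x⁻¹ := by rw [hint]
        _ = ((n : ℝ≥0∞) / ENNReal.ofReal x) * S := by
            rw [ENNReal.ofReal_inv_of_pos hx, div_eq_mul_inv]
            ring
    calc ∫⁻ ω, ENNReal.ofReal (M ω) ∂μ
        = (∫⁻ t in Set.Ioc 0 x, μ {ω | t ≤ M ω}) + ∫⁻ t in Set.Ioi x, μ {ω | t ≤ M ω} := by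
          rw [hlc, hsplit]
      _ ≤ ENNReal.ofReal x + ((n : ℝ≥0∞) / ENNReal.ofReal x) * S := add_le_add hp1 hp2
end

section
/- Let (m_n)_{n≥1} be a sequence of positive integers with m_n/√n → 0 as n → ∞, and for each n let p_n := P(W_n = m_n) where W_n has the binomial distribution with n trials and success probability 1/n. Then e · m_n! · p_n → 1 as n → ∞. -/
open Filter

/-- If `(m_n)` are positive integers with `m_n/√n → 0`, and
`p_n = P(W_n = m_n)` with `W_n ~ Binomial(n, 1/n)`
(so `p_n = C(n, m_n) (1/n)^{m_n} (1 - 1/n)^{n - m_n}`), then `e · m_n! · p_n → 1`. -/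
theorem stmt_7 (m : ℕ → ℕ) (hm : ∀ n, 1 ≤ m n)
    (hlim : Tendsto (fun n : ℕ => (m n : ℝ) / Real.sqrt n) atTop (nhds 0)) :
    Tendsto (fun n : ℕ =>
      Real.exp 1 * (Nat.factorial (m n) : ℝ) *
        ((n.choose (m n) : ℝ) * (1 / n : ℝ) ^ (m n) * (1 - 1 / n : ℝ) ^ (n - m n)))
      atTop (nhds 1) := by
  -- m n ^ 2 / n → 0
  have h2 : Tendsto (fun n : ℕ => ((m n : ℝ)) ^ 2 / n) atTop (nhds 0) := by
    have := (hlim.pow 2)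
    simp only [ne_eq, OfNat.ofNat_ne_zero, not_false_eq_true, zero_pow] at this
    refine this.congr fun n => ?_
    rw [div_pow, Real.sq_sqrt (Nat.cast_nonneg n)]
  -- eventually m n ≤ n and 2 ≤ n
  have hev : ∀ᶠ n : ℕ in atTop, m n ≤ n ∧ 2 ≤ n := by
    filter_upwards [h2.eventually_lt_const one_pos, eventually_ge_atTop 2] with n h1 hn2
    refine ⟨?_, hn2⟩
    have hx : (0:ℝ) < n := by positivity
    have : ((m n : ℝ)) ^ 2 < n := by
      have := (div_lt_one hx).mp h1; linarith
    have h' : ((m n)^2 : ℝ) < (n : ℝ) := by push_cast; exact this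
    have : (m n)^2 < n := by exact_mod_cast h'
    nlinarith [hm n]
  -- auxiliary sequences
  set A : ℕ → ℝ := fun n => Real.exp 1 * (1 + (-1) / n) ^ n with hAdef
  set B : ℕ → ℝ := fun n =>
    (Nat.descFactorial n (m n) : ℝ) / (n : ℝ) ^ (m n) * ((1 - 1 / (n:ℝ))⁻¹) ^ (m n) with hBdef
  have hA : Tendsto A atTop (nhds 1) := by
    have := (Real.tendsto_one_add_div_pow_exp (-1)).const_mul (Real.exp 1)
    simpa [← Real.exp_add] using this
  have hB : Tendsto B atTop (nhds 1) := by
    have hlow : Tendsto (fun n : ℕ => 1 - ((m n : ℝ)) ^ 2 / n) atTop (nhds 1) := by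
      simpa using tendsto_const_nhds.sub h2
    have hup : Tendsto (fun n : ℕ => Real.exp (2 * (((m n : ℝ)) ^ 2 / n))) atTop (nhds 1) := by
      have h3 := h2.const_mul 2
      rw [mul_zero] at h3
      have := (Real.continuous_exp.tendsto 0).comp h3
      simpa [Function.comp_def] using this
    refine tendsto_of_tendsto_of_tendsto_of_le_of_le' hlow hup ?_ ?_
    · -- lower bound
      filter_upwards [hev] with n ⟨hmn, hn2⟩
      have hx : (0:ℝ) < n := by positivity
      have h1x : (0:ℝ) < 1 - 1 / n := by
        rw [sub_pos, div_lt_one hx]; exact_mod_cast hn2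
      have hQ1 : (1:ℝ) ≤ ((1 - 1 / (n:ℝ))⁻¹) ^ (m n) := by
        apply one_le_pow₀
        rw [one_le_inv₀ h1x]
        have : (0:ℝ) ≤ 1 / n := by positivity
        linarith
      have hP0 : (0:ℝ) ≤ (Nat.descFactorial n (m n) : ℝ) / (n : ℝ) ^ (m n) := by positivity
      have hPle : 1 - ((m n : ℝ)) ^ 2 / n
          ≤ (Nat.descFactorial n (m n) : ℝ) / (n : ℝ) ^ (m n) := by
        have hnat : (n - m n) ^ (m n) ≤ Nat.descFactorial n (m n) :=
          le_trans (Nat.pow_le_pow_left (by omega) (m n)) (Nat.pow_sub_le_descFactorial n (m n))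
        have hcast : ((n : ℝ) - m n) ^ (m n) ≤ (Nat.descFactorial n (m n) : ℝ) := by
          rw [show ((n:ℝ) - m n) = ((n - m n : ℕ) : ℝ) by
            rw [Nat.cast_sub hmn]]
          exact_mod_cast hnat
        have hber : 1 - ((m n : ℝ)) ^ 2 / n ≤ (1 - (m n : ℝ) / n) ^ (m n) := by
          have hb := one_add_mul_le_pow (a := -((m n : ℝ) / n))
            (by
              have : (m n : ℝ) / n ≤ 1 := by
                rw [div_le_one hx]; exact_mod_cast hmn
              linarith) (m n)
          have heq1 : (1 : ℝ) + (m n : ℝ) * -((m n : ℝ) / n) = 1 - ((m n : ℝ)) ^ 2 / n := by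
            ring
          have heq2 : (1 : ℝ) + -((m n : ℝ) / n) = 1 - (m n : ℝ) / n := by ring
          rw [heq1, heq2] at hb
          exact hb
        refine le_trans hber ?_
        rw [le_div_iff₀ (by positivity), ← mul_pow]
        have : (1 - (m n : ℝ) / n) * n = (n : ℝ) - m n := by field_simp
        rw [this]
        exact hcast
      calc 1 - ((m n : ℝ)) ^ 2 / n ≤ (Nat.descFactorial n (m n) : ℝ) / (n : ℝ) ^ (m n) := hPle
        _ ≤ B n := by
          simp only [hBdef]
          nlinarith [hQ1, hP0]
    · -- upper bound
      filter_upwards [hev] with n ⟨hmn, hn2⟩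
      have hx : (0:ℝ) < n := by positivity
      have hn2' : (2:ℝ) ≤ n := by exact_mod_cast hn2
      have h1x : (0:ℝ) < 1 - 1 / n := by
        rw [sub_pos, div_lt_one hx]; exact_mod_cast hn2
      have hP1 : (Nat.descFactorial n (m n) : ℝ) / (n : ℝ) ^ (m n) ≤ 1 := by
        rw [div_le_one (by positivity)]
        exact_mod_cast Nat.descFactorial_le_pow n (m n)
      have hQnn : (0:ℝ) ≤ ((1 - 1 / (n:ℝ))⁻¹) ^ (m n) := by positivity
      have hinv : (1 - 1 / (n:ℝ))⁻¹ ≤ Real.exp (1 / ((n:ℝ) - 1)) := by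
        have hne : (n:ℝ) - 1 ≠ 0 := by linarith
        have heq : (1 - 1 / (n:ℝ))⁻¹ = 1 / ((n:ℝ) - 1) + 1 := by
          refine inv_eq_of_mul_eq_one_left ?_
          field_simp
          ring
        rw [heq]
        exact Real.add_one_le_exp _
      have hQle : ((1 - 1 / (n:ℝ))⁻¹) ^ (m n) ≤ Real.exp (2 * (((m n : ℝ)) ^ 2 / n)) := by
        calc ((1 - 1 / (n:ℝ))⁻¹) ^ (m n) ≤ (Real.exp (1 / ((n:ℝ) - 1))) ^ (m n) :=
              pow_le_pow_left₀ (by positivity) hinv (m n)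
          _ = Real.exp ((m n : ℝ) * (1 / ((n:ℝ) - 1))) := (Real.exp_nat_mul _ _).symm
          _ ≤ Real.exp (2 * (((m n : ℝ)) ^ 2 / n)) := by
              apply Real.exp_le_exp.mpr
              rw [mul_one_div, mul_div_assoc', div_le_div_iff₀ (by linarith) hx]
              have hm1 : (1:ℝ) ≤ (m n : ℝ) := by exact_mod_cast hm n
              have ha : (0:ℝ) ≤ (m n : ℝ) - 1 := by linarith
              have hb : (0:ℝ) ≤ (n:ℝ) - 2 := by linarith
              nlinarith [mul_nonneg ha hb, mul_nonneg (mul_nonneg ha ha) hb,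
                mul_nonneg (mul_nonneg ha hb) hb, mul_nonneg ha ha]
      calc B n ≤ ((1 - 1 / (n:ℝ))⁻¹) ^ (m n) := by
            simp only [hBdef]
            exact mul_le_of_le_one_left hQnn hP1
        _ ≤ Real.exp (2 * (((m n : ℝ)) ^ 2 / n)) := hQle
  have heq : (fun n : ℕ => Real.exp 1 * (Nat.factorial (m n) : ℝ) *
        ((n.choose (m n) : ℝ) * (1 / n : ℝ) ^ (m n) * (1 - 1 / n : ℝ) ^ (n - m n)))
      =ᶠ[atTop] fun n => A n * B n := by
    filter_upwards [hev] with n ⟨hmn, hn2⟩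
    have hx : (0:ℝ) < n := by positivity
    have h1x : (0:ℝ) < 1 - 1 / n := by
      rw [sub_pos, div_lt_one hx]; exact_mod_cast hn2
    have hdesc : (Nat.descFactorial n (m n) : ℝ)
        = (Nat.factorial (m n) : ℝ) * (n.choose (m n) : ℝ) := by
      exact_mod_cast congrArg (Nat.cast : ℕ → ℝ) (Nat.descFactorial_eq_factorial_mul_choose n (m n))
    have hpow : (1 - 1 / (n:ℝ)) ^ (n - m n)
        = (1 - 1 / (n:ℝ)) ^ n * ((1 - 1 / (n:ℝ)) ^ (m n))⁻¹ :=
      pow_sub₀ _ h1x.ne' hmn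
    have hone : (1:ℝ) + (-1) / n = 1 - 1 / n := by ring
    simp only [hAdef, hBdef]
    rw [hpow, hdesc, hone]
    ring
  have hAB : Tendsto (fun n => A n * B n) atTop (nhds 1) := by
    simpa using hA.mul hB
  exact hAB.congr' heq.symm
end

section
/- Let n ≥ 1, let M be a random variable with the binomial distribution with n trials and success probability 1/n, and let W be a random variable whose conditional distribution given M = m is binomial with n trials and success probability m/n (this is the first coordinate of the double-bootstrap weight vector). Then for every λ > 0, E[e^{λ W}] ≤ exp(e^{e^{λ} - 1} - 1). Moreover, E[e^{λ W} | M] = (1 + (M/n)(e^{λ} - 1))^n ≤ exp((e^{λ} - 1) M) almost surely. -/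
open MeasureTheory Filter

lemma binom_mgf (n : ℕ) (q s : ℝ) :
    ∑ k ∈ Finset.range (n+1), (n.choose k : ℝ) * q^k * (1-q)^(n-k) * s^k
      = (1 + q*(s-1))^n := by
  have h := add_pow (q*s) (1-q) n
  have h2 : q*s + (1-q) = 1 + q*(s-1) := by ring
  rw [h2] at h
  rw [h]
  apply Finset.sum_congr rfl
  intro k _
  rw [mul_pow]
  ring

lemma one_add_le_exp_pow (n : ℕ) {t : ℝ} (ht : 0 ≤ t) : (1+t)^n ≤ Real.exp (t*n) := by
  calc (1+t)^n ≤ (Real.exp t)^n := by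
        apply pow_le_pow_left₀ (by linarith)
        linarith [Real.add_one_le_exp t]
      _ = Real.exp (t*n) := by rw [← Real.exp_nat_mul]; ring_nf

/-- Double-bootstrap weight: `M ~ Binomial(n, 1/n)` and, conditionally
on `M = m`, `W ~ Binomial(n, m/n)`.  Then for every `λ > 0`,
`E[e^{λW}] ≤ exp(e^{e^λ - 1} - 1)`, and (stated atomwise, i.e. almost surely in `M`)
`E[e^{λW} | M = m] = (1 + (m/n)(e^λ - 1))^n ≤ exp((e^λ - 1) m)`. -/
theorem stmt_8 {Ω : Type*} [MeasurableSpace Ω] (μ : Measure Ω) [IsProbabilityMeasure μ]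
    (n : ℕ) (hn : 1 ≤ n) (M W : Ω → ℕ) (hM : Measurable M) (hW : Measurable W)
    (hjoint : ∀ m k : ℕ,
      (μ ({ω | M ω = m} ∩ {ω | W ω = k})).toReal =
        ((n.choose m : ℝ) * (1 / n : ℝ) ^ m * (1 - 1 / n : ℝ) ^ (n - m)) *
          ((n.choose k : ℝ) * ((m : ℝ) / n) ^ k * (1 - (m : ℝ) / n) ^ (n - k)))
    (l : ℝ) (hl : 0 < l) :
    (∫ ω, Real.exp (l * W ω) ∂μ ≤ Real.exp (Real.exp (Real.exp l - 1) - 1)) ∧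
    ∀ m : ℕ,
      (∫ ω in {ω | M ω = m}, Real.exp (l * W ω) ∂μ =
        (μ {ω | M ω = m}).toReal * (1 + ((m : ℝ) / n) * (Real.exp l - 1)) ^ n) ∧
      (∫ ω in {ω | M ω = m}, Real.exp (l * W ω) ∂μ ≤
        (μ {ω | M ω = m}).toReal * Real.exp ((Real.exp l - 1) * m)) := by
  have hn0 : (0:ℝ) < n := by exact_mod_cast hn
  set p : ℕ → ℝ := fun m => (n.choose m : ℝ) * (1 / n : ℝ) ^ m * (1 - 1 / n : ℝ) ^ (n - m)
    with hp
  set g : ℕ → ℕ → ℝ := fun m k =>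
    (n.choose k : ℝ) * ((m : ℝ) / n) ^ k * (1 - (m : ℝ) / n) ^ (n - k) with hg
  set A : ℕ → Set Ω := fun m => {ω | M ω = m} with hA
  set B : ℕ → Set Ω := fun k => {ω | W ω = k} with hB
  have hAm : ∀ m, MeasurableSet (A m) := fun m => hM (measurableSet_singleton m)
  have hBk : ∀ k, MeasurableSet (B k) := fun k => hW (measurableSet_singleton k)
  have hne : ∀ (s : Set Ω), μ s ≠ ⊤ := fun s => measure_ne_top μ s
  -- g vanishes for k > n
  have hg0 : ∀ m k, n < k → g m k = 0 := by
    intro m k hk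
    simp [hg, Nat.choose_eq_zero_of_lt hk]
  have hp0 : ∀ m, n < m → p m = 0 := by
    intro m hm
    simp [hp, Nat.choose_eq_zero_of_lt hm]
  have hpnn : ∀ m, 0 ≤ p m := by
    intro m
    apply mul_nonneg (mul_nonneg (by positivity) (by positivity))
    apply pow_nonneg
    have : (1:ℝ)/n ≤ 1 := by
      rw [div_le_one hn0]; exact_mod_cast hn
    linarith
  -- disjointness of fibers of W within A m
  have hdisjB : ∀ m, Pairwise (Function.onFun Disjoint (fun k => A m ∩ B k)) := by
    intro m k j hkj
    apply Set.disjoint_left.mpr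
    rintro ω ⟨-, hk⟩ ⟨-, hj⟩
    exact hkj (hk.symm.trans hj)
  have hdisjA : Pairwise (Function.onFun Disjoint A) := by
    intro m m' hmm
    apply Set.disjoint_left.mpr
    intro ω h1 h2
    exact hmm (h1.symm.trans h2)
  have hAcover : (⋃ m, A m) = Set.univ := by
    ext ω; simp [hA]
  -- μ (A m) in terms of p
  have hμA : ∀ m, (μ (A m)).toReal = p m := by
    intro m
    have hcov : A m = ⋃ k, A m ∩ B k := by
      ext ω
      simp only [Set.mem_iUnion, Set.mem_inter_iff]
      constructor
      · intro h; exact ⟨W ω, h, rfl⟩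
      · rintro ⟨k, h, -⟩; exact h
    have hmu := measure_iUnion (μ := μ) (hdisjB m) (fun k => (hAm m).inter (hBk k))
    rw [hcov, hmu, ENNReal.tsum_toReal_eq (fun k => hne _)]
    have hsum : ∀ k, (μ (A m ∩ B k)).toReal = p m * g m k := fun k => hjoint m k
    calc (∑' k, (μ (A m ∩ B k)).toReal) = ∑' k, p m * g m k := by
          exact tsum_congr hsum
      _ = ∑ k ∈ Finset.range (n+1), p m * g m k := by
          apply tsum_eq_sum
          intro k hk
          have : n < k := by
            by_contra h
            exact hk (Finset.mem_range.mpr (by omega))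
          rw [hg0 m k this, mul_zero]
      _ = p m * ∑ k ∈ Finset.range (n+1), (n.choose k : ℝ) * ((m:ℝ)/n)^k *
            (1 - (m:ℝ)/n)^(n-k) * (1:ℝ)^k := by
          rw [Finset.mul_sum]
          apply Finset.sum_congr rfl
          intro k _
          simp [hg]
      _ = p m := by
          rw [binom_mgf]
          simp
  -- W ≤ n almost surely
  have hBzero : ∀ k, n < k → μ (B k) = 0 := by
    intro k hk
    have hcov : B k = ⋃ m, A m ∩ B k := by
      ext ω
      simp only [Set.mem_iUnion, Set.mem_inter_iff]
      constructor
      · intro h; exact ⟨M ω, rfl, h⟩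
      · rintro ⟨m, -, h⟩; exact h
    have hdisj : Pairwise (Function.onFun Disjoint (fun m => A m ∩ B k)) := by
      intro m m' hmm
      apply Set.disjoint_left.mpr
      rintro ω ⟨h1, -⟩ ⟨h2, -⟩
      exact hmm (h1.symm.trans h2)
    rw [hcov, measure_iUnion (μ := μ) hdisj (fun m => (hAm m).inter (hBk k))]
    apply ENNReal.tsum_eq_zero.mpr
    intro m
    have h0 : (μ (A m ∩ B k)).toReal = 0 := by
      rw [hjoint m k]
      have : g m k = 0 := hg0 m k hk
      simp only [hg] at this
      rw [this, mul_zero]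
    rcases ENNReal.toReal_eq_zero_iff _ |>.mp h0 with h | h
    · exact h
    · exact absurd h (hne _)
  have hWle : ∀ᵐ ω ∂μ, W ω ≤ n := by
    rw [ae_iff]
    have hsub : {ω | ¬ W ω ≤ n} ⊆ ⋃ k, B (k + n + 1) := by
      intro ω hω
      have hω' : n < W ω := by simpa using hω
      simp only [Set.mem_iUnion, hB, Set.mem_setOf_eq]
      exact ⟨W ω - n - 1, by omega⟩
    exact measure_mono_null hsub (measure_iUnion_null fun k => hBzero _ (by omega))
  -- integrability
  have hmble : Measurable (fun ω => Real.exp (l * W ω)) := by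
    apply Real.measurable_exp.comp
    exact measurable_const.mul ((measurable_from_top : Measurable (fun k : ℕ => (k:ℝ))).comp hW)
  have hInt : Integrable (fun ω => Real.exp (l * W ω)) μ := by
    apply Integrable.mono' (integrable_const (Real.exp (l * n))) hmble.aestronglyMeasurable
    filter_upwards [hWle] with ω hω
    rw [Real.norm_eq_abs, abs_of_pos (Real.exp_pos _)]
    apply Real.exp_le_exp.mpr
    apply mul_le_mul_of_nonneg_left _ hl.le
    exact_mod_cast hω
  -- key computation on each atom
  have key : ∀ m, ∫ ω in A m, Real.exp (l * W ω) ∂μ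
      = p m * (1 + ((m:ℝ)/n) * (Real.exp l - 1)) ^ n := by
    intro m
    have heq : ∀ᵐ ω ∂(μ.restrict (A m)), Real.exp (l * W ω)
        = ∑ k ∈ Finset.range (n+1), (B k).indicator (fun _ => Real.exp (l * k)) ω := by
      filter_upwards [ae_restrict_of_ae hWle] with ω hω
      rw [Finset.sum_indicator_eq_sum_filter]
      have : Finset.filter (fun k => ω ∈ B k) (Finset.range (n+1)) = {W ω} := by
        ext k
        simp only [Finset.mem_filter, Finset.mem_range, Finset.mem_singleton, hB,
          Set.mem_setOf_eq]
        constructor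
        · rintro ⟨-, h⟩; exact h.symm
        · rintro rfl; exact ⟨by omega, rfl⟩
      rw [this, Finset.sum_singleton]
    rw [integral_congr_ae heq, integral_finset_sum _ (fun k _ =>
      (integrable_const _).indicator (hBk k))]
    have hterm : ∀ k, ∫ ω in A m, (B k).indicator (fun _ => Real.exp (l * k)) ω ∂μ
        = p m * g m k * Real.exp (l * k) := by
      intro k
      rw [integral_indicator_const _ (hBk k), measureReal_def, Measure.restrict_apply (hBk k),
        Set.inter_comm, smul_eq_mul, ← hjoint m k, mul_comm]
    calc (∑ k ∈ Finset.range (n+1), ∫ ω in A m,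
            (B k).indicator (fun _ => Real.exp (l * k)) ω ∂μ)
        = ∑ k ∈ Finset.range (n+1), p m * ((n.choose k : ℝ) * ((m:ℝ)/n)^k *
            (1 - (m:ℝ)/n)^(n-k) * (Real.exp l)^k) := by
          apply Finset.sum_congr rfl
          intro k _
          rw [hterm k]
          have : Real.exp (l * k) = (Real.exp l)^k := by
            rw [← Real.exp_nat_mul]; ring_nf
          rw [this, hg]
          ring
      _ = p m * (1 + ((m:ℝ)/n) * (Real.exp l - 1)) ^ n := by
          rw [← Finset.mul_sum, binom_mgf]
  -- atomwise inequality
  have hatom : ∀ m, p m * (1 + ((m:ℝ)/n) * (Real.exp l - 1)) ^ n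
      ≤ p m * Real.exp ((Real.exp l - 1) * m) := by
    intro m
    apply mul_le_mul_of_nonneg_left _ (hpnn m)
    have hexp1 : (1:ℝ) ≤ Real.exp l := by linarith [Real.add_one_le_exp l]
    have ht : 0 ≤ ((m:ℝ)/n) * (Real.exp l - 1) := by
      apply mul_nonneg (by positivity)
      linarith
    refine le_trans (one_add_le_exp_pow n ht) ?_
    apply Real.exp_le_exp.mpr
    rw [div_mul_eq_mul_div, div_mul_eq_mul_div, mul_div_assoc, div_self hn0.ne']
    ring_nf
    exact le_refl _
  -- total integral
  have htotal : ∫ ω, Real.exp (l * W ω) ∂μ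
      = ∑ m ∈ Finset.range (n+1), p m * (1 + ((m:ℝ)/n) * (Real.exp l - 1)) ^ n := by
    have h1 : ∫ ω, Real.exp (l * W ω) ∂μ = ∫ ω in ⋃ m, A m, Real.exp (l * W ω) ∂μ := by
      rw [hAcover, Measure.restrict_univ]
    rw [h1, integral_iUnion hAm hdisjA (hAcover ▸ hInt.integrableOn)]
    rw [tsum_eq_sum (f := fun m => ∫ ω in A m, Real.exp (l * W ω) ∂μ)
      (s := Finset.range (n+1)) ?_]
    · exact Finset.sum_congr rfl (fun m _ => key m)
    · intro m hm
      have hmn : n < m := by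
        by_contra h
        exact hm (Finset.mem_range.mpr (by omega))
      simp only [key m, hp0 m hmn, zero_mul]
  constructor
  · rw [htotal]
    set s : ℝ := Real.exp (Real.exp l - 1) with hs
    have hexp1 : (1:ℝ) ≤ Real.exp l := by linarith [Real.add_one_le_exp l]
    have hs1 : (1:ℝ) ≤ s := by
      have := Real.add_one_le_exp (Real.exp l - 1)
      rw [hs]; linarith
    calc (∑ m ∈ Finset.range (n+1), p m * (1 + ((m:ℝ)/n) * (Real.exp l - 1)) ^ n)
        ≤ ∑ m ∈ Finset.range (n+1), p m * s ^ m := by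
          apply Finset.sum_le_sum
          intro m _
          refine le_trans (hatom m) ?_
          apply le_of_eq
          rw [hs, ← Real.exp_nat_mul, mul_comm (m:ℝ) (Real.exp l - 1)]
      _ = (1 + (1/(n:ℝ)) * (s - 1)) ^ n := by
          rw [← binom_mgf n (1/(n:ℝ)) s]
      _ ≤ Real.exp ((1/(n:ℝ)) * (s - 1) * n) := by
          apply one_add_le_exp_pow
          have : 0 ≤ s - 1 := by linarith
          positivity
      _ = Real.exp (s - 1) := by
          congr 1
          field_simp
  · intro m
    have h1 : ∫ ω in {ω | M ω = m}, Real.exp (l * W ω) ∂μ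
        = (μ {ω | M ω = m}).toReal * (1 + ((m : ℝ) / n) * (Real.exp l - 1)) ^ n := by
      have h2 := key m
      rw [← hμA m] at h2
      exact h2
    refine ⟨h1, ?_⟩
    rw [h1]
    have := hatom m
    rw [← hμA m] at this
    exact this
end

section
/- Let Y_1, Y_2, … be i.i.d. random variables with P(Y_1 > 0) = 1, finite mean μ := E[Y_1] > 0, and exponential tail P(Y_1 ≥ t) ≤ C e^{-b t} for all t ≥ 0, where C > 0 and b > 0. For each n define the normalized multiplier bootstrap weights W_i := Y_i / ((1/n) ∑_{j=1}^n Y_j) for i = 1, …, n. Then there exists a constant C' > 0, depending only on the distribution of Y_1, such that E[max_{1≤i≤n} W_i] ≤ C' log n for all n ≥ 2; in particular a_n := n^{-1/2} E[max_{1≤i≤n} W_i] ≤ C' (log n)/√n. -/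
open MeasureTheory ProbabilityTheory ENNReal Filter Topology

lemma my_exp_quad {x : ℝ} (hx : 0 ≤ x) : Real.exp (-x) ≤ 1 - x + x ^ 2 / 2 := by
  have key : ∀ y ∈ Set.Ici (0:ℝ), (1:ℝ) ≤ (1 - y + y ^ 2 / 2) * Real.exp y := by
    have hmono : MonotoneOn (fun y : ℝ => (1 - y + y ^ 2 / 2) * Real.exp y) (Set.Ici 0) := by
      apply monotoneOn_of_deriv_nonneg (convex_Ici 0)
      · fun_prop
      · fun_prop
      · intro y hy
        have hd : HasDerivAt (fun y : ℝ => (1 - y + y ^ 2 / 2) * Real.exp y)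
            ((y ^ 2 / 2) * Real.exp y) y := by
          have h1 : HasDerivAt (fun y : ℝ => 1 - y + y ^ 2 / 2) (-1 + 2 * y ^ 1 / 2) y := by
            exact (((hasDerivAt_const y (1:ℝ)).sub (hasDerivAt_id y)).add
              ((hasDerivAt_pow 2 y).div_const 2)).congr_deriv (by ring)
          have := h1.mul (Real.hasDerivAt_exp y)
          refine this.congr_deriv ?_
          ring
        rw [hd.deriv]
        positivity
    intro y hy
    have := hmono (Set.self_mem_Ici) hy (Set.mem_Ici.mp hy)
    simpa using this
  have h := key x hx
  rw [Real.exp_neg, inv_le_iff_one_le_mul₀ (Real.exp_pos x)]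
  linarith [h]

lemma my_nqn {q : ℝ} (h0 : 0 < q) (h1 : q < 1) (n : ℕ) : (n : ℝ) * q ^ n ≤ 1 / (1 - q) := by
  have h1q : 0 < 1 - q := by linarith
  have ha : (0:ℝ) ≤ (1 - q) / q := by positivity
  have hber := one_add_mul_le_pow (a := (1 - q) / q) (by linarith) n
  have heq : (1 + (1 - q) / q) = 1 / q := by field_simp; ring
  rw [heq] at hber
  have h2 : (n : ℝ) * (1 - q) ≤ (1 / q) ^ n := by
    calc (n : ℝ) * (1 - q) ≤ (n : ℝ) * ((1 - q) / q) := by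
          apply mul_le_mul_of_nonneg_left _ (Nat.cast_nonneg n)
          rw [le_div_iff₀ h0]; nlinarith
      _ ≤ 1 + n * ((1 - q) / q) := by linarith
      _ ≤ (1 / q) ^ n := hber
  have hq : (0:ℝ) < q ^ n := by positivity
  rw [div_pow, one_pow, le_div_iff₀ hq] at h2
  rw [le_div_iff₀ h1q]
  nlinarith

lemma my_rho {Ω : Type*} [MeasurableSpace Ω] (P : Measure Ω) [IsProbabilityMeasure P]
    (Y0 : Ω → ℝ) (hmeas : Measurable Y0) (hpos : ∀ᵐ ω ∂P, 0 < Y0 ω)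
    (hint : Integrable Y0 P) (hmean : 0 < ∫ ω, Y0 ω ∂P) :
    ∃ s x : ℝ, 0 < s ∧ 0 < x ∧ x < 1 ∧ x = s * (∫ ω, Y0 ω ∂P) / 2 ∧
      ∫ ω, Real.exp (-s * Y0 ω) ∂P ≤ 1 - x := by
  set μ := ∫ ω, Y0 ω ∂P with hμ
  -- truncation
  have htendsto : Tendsto (fun m : ℕ => ∫ ω, min (Y0 ω) m ∂P) atTop (𝓝 μ) := by
    apply tendsto_integral_of_dominated_convergence (fun ω => |Y0 ω|)
    · intro m
      exact (hmeas.min measurable_const).aestronglyMeasurable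
    · exact hint.abs
    · intro m
      filter_upwards [hpos] with ω hω
      rw [Real.norm_eq_abs, abs_of_nonneg (le_min hω.le (Nat.cast_nonneg m))]
      exact (min_le_left _ _).trans (le_abs_self _)
    · filter_upwards with ω
      apply tendsto_const_nhds.congr'
      filter_upwards [eventually_ge_atTop ⌈Y0 ω⌉₊] with m hm
      rw [eq_comm, min_eq_left]
      exact le_trans (Nat.le_ceil _) (by exact_mod_cast hm)
  obtain ⟨m, hm1, hm2⟩ :=
    ((htendsto.eventually (eventually_ge_nhds (by linarith : 3 * μ / 4 < μ))).and
      (eventually_ge_atTop 1)).exists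
  set M : ℝ := (m : ℝ) with hM
  have hM1 : (1:ℝ) ≤ M := by rw [hM]; exact_mod_cast hm2
  have hM0 : (0:ℝ) < M := by linarith
  have hmin_int : Integrable (fun ω => min (Y0 ω) M) P := hint.inf (integrable_const M)
  have hmin_le : (3:ℝ) * μ / 4 ≤ ∫ ω, min (Y0 ω) M ∂P := hm1
  have hminM : ∫ ω, min (Y0 ω) M ∂P ≤ M := by
    calc ∫ ω, min (Y0 ω) M ∂P ≤ ∫ _ω, M ∂P :=
          integral_mono hmin_int (integrable_const M) (fun ω => min_le_right _ _)
      _ = M := by simp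
  have hμM : 3 * μ / 4 ≤ M := le_trans hmin_le hminM
  set s : ℝ := μ / (2 * M ^ 2) with hs
  have hs0 : 0 < s := by positivity
  set x : ℝ := s * μ / 2 with hx
  have hx0 : 0 < x := by positivity
  have hx1 : x < 1 := by
    have : x = μ ^ 2 / (4 * M ^ 2) := by rw [hx, hs]; ring
    rw [this]
    rw [div_lt_one (by positivity)]
    nlinarith
  refine ⟨s, x, hs0, hx0, hx1, by rw [hx], ?_⟩
  -- pointwise bound
  have hptwise : ∀ᵐ ω ∂P, Real.exp (-s * Y0 ω) ≤
      (1 + s ^ 2 * M ^ 2 / 2) - s * min (Y0 ω) M := by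
    filter_upwards [hpos] with ω hω
    have h1 : Real.exp (-s * Y0 ω) ≤ Real.exp (-(s * min (Y0 ω) M)) := by
      apply Real.exp_le_exp.mpr
      have : min (Y0 ω) M ≤ Y0 ω := min_le_left _ _
      nlinarith
    have hmn : 0 ≤ s * min (Y0 ω) M := by positivity
    have h2 := my_exp_quad hmn
    have h3 : (s * min (Y0 ω) M) ^ 2 ≤ s ^ 2 * M ^ 2 := by
      have : s * min (Y0 ω) M ≤ s * M :=
        mul_le_mul_of_nonneg_left (min_le_right _ _) hs0.le
      nlinarith
    calc Real.exp (-s * Y0 ω) ≤ Real.exp (-(s * min (Y0 ω) M)) := h1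
      _ ≤ 1 - s * min (Y0 ω) M + (s * min (Y0 ω) M) ^ 2 / 2 := h2
      _ ≤ (1 + s ^ 2 * M ^ 2 / 2) - s * min (Y0 ω) M := by linarith
  have hexp_int : Integrable (fun ω => Real.exp (-s * Y0 ω)) P := by
    apply Integrable.mono' (integrable_const 1) ((hmeas.const_mul (-s)).exp).aestronglyMeasurable
    filter_upwards [hpos] with ω hω
    rw [Real.norm_eq_abs, abs_of_nonneg (Real.exp_pos _).le]
    calc Real.exp (-s * Y0 ω) ≤ Real.exp 0 := Real.exp_le_exp.mpr (by nlinarith)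
      _ = 1 := Real.exp_zero
  have hRHS_int : Integrable (fun ω => (1 + s ^ 2 * M ^ 2 / 2) - s * min (Y0 ω) M) P :=
    (integrable_const _).sub (hmin_int.const_mul s)
  have hle : ∫ ω, Real.exp (-s * Y0 ω) ∂P ≤
      ∫ ω, ((1 + s ^ 2 * M ^ 2 / 2) - s * min (Y0 ω) M) ∂P :=
    integral_mono_ae hexp_int hRHS_int hptwise
  have hcomp : ∫ ω, ((1 + s ^ 2 * M ^ 2 / 2) - s * min (Y0 ω) M) ∂P =
      (1 + s ^ 2 * M ^ 2 / 2) - s * ∫ ω, min (Y0 ω) M ∂P := by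
    rw [integral_sub (integrable_const _) (hmin_int.const_mul s), integral_const,
      integral_const_mul]
    simp
  rw [hcomp] at hle
  -- s^2*M^2/2 = s*μ/4
  have hkey : s ^ 2 * M ^ 2 / 2 = s * μ / 4 := by
    rw [hs]; field_simp; ring
  have : (1 + s ^ 2 * M ^ 2 / 2) - s * ∫ ω, min (Y0 ω) M ∂P ≤
      1 + s * μ / 4 - s * (3 * μ / 4) := by
    rw [hkey]
    have := mul_le_mul_of_nonneg_left hmin_le hs0.le
    linarith
  rw [hx]
  linarith

lemma my_chernoff {Ω : Type*} [MeasurableSpace Ω] (P : Measure Ω) [IsProbabilityMeasure P]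
    (Y : ℕ → Ω → ℝ) (hmeas : ∀ i, Measurable (Y i))
    (hindep : iIndepFun Y P)
    (hident : ∀ i, IdentDistrib (Y i) (Y 0) P P)
    (hpos_all : ∀ᵐ ω ∂P, ∀ i, 0 < Y i ω)
    (s : ℝ) (hs : 0 < s) (n : ℕ) (ε : ℝ) :
    (P {ω | (∑ j ∈ Finset.range n, Y j ω) ≤ ε}).toReal ≤
      Real.exp (s * ε) * (∫ ω, Real.exp (-s * Y 0 ω) ∂P) ^ n := by
  set S : Ω → ℝ := ∑ j ∈ Finset.range n, Y j with hS
  have hSapp : ∀ ω, S ω = ∑ j ∈ Finset.range n, Y j ω := fun ω => by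
    rw [hS, Finset.sum_apply]
  have hSmeas : Measurable S := by
    have he : S = fun ω => ∑ j ∈ Finset.range n, Y j ω := funext hSapp
    rw [he]; exact Finset.measurable_sum _ (fun i _ => hmeas i)
  have hint_exp : Integrable (fun ω => Real.exp (-s * S ω)) P := by
    apply Integrable.mono' (integrable_const 1) ((hSmeas.const_mul (-s)).exp).aestronglyMeasurable
    filter_upwards [hpos_all] with ω hω
    rw [Real.norm_eq_abs, abs_of_nonneg (Real.exp_pos _).le]
    have hSnn : 0 ≤ S ω := by
      rw [hSapp]
      exact Finset.sum_nonneg (fun i _ => (hω i).le)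
    calc Real.exp (-s * S ω) ≤ Real.exp 0 := Real.exp_le_exp.mpr (by nlinarith)
      _ = 1 := Real.exp_zero
  have h := measure_le_le_exp_mul_mgf (μ := P) (X := S) ε (t := -s)
    (neg_nonpos.mpr hs.le) hint_exp
  have hmgf : mgf S P (-s) = (∫ ω, Real.exp (-s * Y 0 ω) ∂P) ^ n := by
    rw [hS, hindep.mgf_sum hmeas (Finset.range n)]
    have heach : ∀ i, mgf (Y i) P (-s) = ∫ ω, Real.exp (-s * Y 0 ω) ∂P := by
      intro i
      have hid := (hident i).comp (u := fun y : ℝ => Real.exp (-s * y))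
        ((measurable_id.const_mul (-s)).exp)
      have := hid.integral_eq
      simpa [mgf, Function.comp] using this
    rw [Finset.prod_congr rfl (fun i _ => heach i), Finset.prod_const, Finset.card_range]
  have hset : {ω | (∑ j ∈ Finset.range n, Y j ω) ≤ ε} = {ω | S ω ≤ ε} := by
    ext ω; simp [hSapp]
  rw [hset]
  calc (P {ω | S ω ≤ ε}).toReal ≤ Real.exp (- -s * ε) * mgf S P (-s) := h
    _ = Real.exp (s * ε) * (∫ ω, Real.exp (-s * Y 0 ω) ∂P) ^ n := by
        rw [hmgf, neg_neg]

/-- Let `Y_1, Y_2, …` be i.i.d., almost surely positive, with positive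
finite mean and exponential tail `P(Y ≥ t) ≤ C e^{-bt}`.  For the normalized multiplier
bootstrap weights `W_i = Y_i / ((1/n) ∑_{j<n} Y_j)`, there is a constant `C' > 0`
(depending only on the distribution of `Y_1`) with `E[max_{i<n} W_i] ≤ C' log n`
for all `n ≥ 2`; in particular `a_n = n^{-1/2} E[max_i W_i] ≤ C' (log n)/√n`. -/
theorem stmt_9 {Ω : Type*} [MeasurableSpace Ω] (P : Measure Ω) [IsProbabilityMeasure P]
    (Y : ℕ → Ω → ℝ) (hmeas : ∀ i, Measurable (Y i))
    (hindep : iIndepFun Y P)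
    (hident : ∀ i, IdentDistrib (Y i) (Y 0) P P)
    (hpos : ∀ᵐ ω ∂P, 0 < Y 0 ω)
    (hint : Integrable (Y 0) P) (hmean : 0 < ∫ ω, Y 0 ω ∂P)
    (C b : ℝ) (hC : 0 < C) (hb : 0 < b)
    (htail : ∀ t : ℝ, 0 ≤ t → P {ω | t ≤ Y 0 ω} ≤ ENNReal.ofReal (C * Real.exp (-b * t))) :
    ∃ C' > (0 : ℝ), ∀ n : ℕ, 2 ≤ n →
      (∫⁻ ω, ENNReal.ofReal
          (⨆ i : Fin n, Y i ω / ((1 / n : ℝ) * ∑ j ∈ Finset.range n, Y j ω)) ∂P ≤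
        ENNReal.ofReal (C' * Real.log n)) ∧
      (∫⁻ ω, ENNReal.ofReal
          (⨆ i : Fin n, Y i ω / ((1 / n : ℝ) * ∑ j ∈ Finset.range n, Y j ω)) ∂P) /
          ENNReal.ofReal (Real.sqrt n) ≤
        ENNReal.ofReal (C' * Real.log n / Real.sqrt n) := by
  set μ := ∫ ω, Y 0 ω ∂P with hμdef
  -- positivity of all coordinates
  have hpos_all : ∀ᵐ ω ∂P, ∀ i, 0 < Y i ω := by
    rw [ae_all_iff]
    intro i
    have hs0 : MeasurableSet (Set.Ioi (0:ℝ)) := measurableSet_Ioi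
    have h := (hident i).measure_mem_eq hs0
    have key : P (Y i ⁻¹' Set.Ioi 0) = 1 := by
      rw [h]
      have hcompl : (Y 0 ⁻¹' Set.Ioi 0)ᶜ = {ω | ¬ 0 < Y 0 ω} := by ext ω; simp
      have hc : P (Y 0 ⁻¹' Set.Ioi 0)ᶜ = 0 := by rw [hcompl]; exact ae_iff.mp hpos
      rwa [prob_compl_eq_zero_iff ((hmeas 0) hs0)] at hc
    rw [ae_iff]
    have hci : {a | ¬ 0 < Y i a} = (Y i ⁻¹' Set.Ioi 0)ᶜ := by ext ω; simp
    rw [hci, prob_compl_eq_zero_iff ((hmeas i) hs0), key]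
  obtain ⟨s, x, hs0, hx0, hx1, hxeq, hρle⟩ := my_rho P (Y 0) (hmeas 0) hpos hint hmean
  set ρ := ∫ ω, Real.exp (-s * Y 0 ω) ∂P with hρdef
  have hρnn : 0 ≤ ρ := integral_nonneg (fun ω => (Real.exp_pos _).le)
  set q : ℝ := Real.exp x * (1 - x) with hqdef
  have h1x : 0 < 1 - x := by linarith
  have hq0 : 0 < q := by positivity
  have hq1 : q < 1 := by
    have h := Real.add_one_lt_exp (neg_ne_zero.mpr hx0.ne')
    have h2 : 1 - x < Real.exp (-x) := by linarith
    calc q < Real.exp x * Real.exp (-x) := by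
          exact mul_lt_mul_of_pos_left h2 (Real.exp_pos x)
      _ = 1 := by rw [← Real.exp_add]; simp
  set D : ℝ := C + 1 / (1 - q) with hDdef
  have hq1' : 0 < 1 - q := by linarith
  have hD0 : 0 < D := by positivity
  set K : ℝ := 2 / b with hKdef
  have hK0 : 0 < K := by positivity
  have hlog2 : 0 < Real.log 2 := Real.log_pos one_lt_two
  set C' : ℝ := 2 * K / μ + D / Real.log 2 with hC'def
  have hC'0 : 0 < C' := by positivity
  refine ⟨C', hC'0, fun n hn => ?_⟩
  have hn0 : (0:ℝ) < n := by positivity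
  have hn2 : (2:ℝ) ≤ n := by exact_mod_cast hn
  have hlogn : Real.log 2 ≤ Real.log n := Real.log_le_log (by norm_num) hn2
  have hlogn0 : 0 < Real.log n := lt_of_lt_of_le hlog2 hlogn
  set Ln : ℝ := K * Real.log n with hLndef
  have hLn0 : 0 < Ln := by positivity
  haveI : Nonempty (Fin n) := ⟨⟨0, by omega⟩⟩
  -- bad sets
  set B1 : Set Ω := ⋃ i ∈ Finset.range n, {ω | Ln < Y i ω} with hB1def
  set B2 : Set Ω := {ω | (∑ j ∈ Finset.range n, Y j ω) < n * μ / 2} with hB2def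
  have hB1meas : MeasurableSet B1 :=
    Finset.measurableSet_biUnion _ (fun i _ => measurableSet_lt measurable_const (hmeas i))
  have hSmeas : Measurable (fun ω => ∑ j ∈ Finset.range n, Y j ω) :=
    Finset.measurable_sum _ (fun i _ => hmeas i)
  have hB2meas : MeasurableSet B2 := measurableSet_lt hSmeas measurable_const
  set B : Set Ω := B1 ∪ B2 with hBdef
  have hBmeas : MeasurableSet B := hB1meas.union hB2meas
  -- the supremum function
  set g : Ω → ℝ := fun ω => ⨆ i : Fin n, Y i ω / ((1 / n : ℝ) * ∑ j ∈ Finset.range n, Y j ω)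
    with hgdef
  -- global a.e. bound g ≤ n
  have hbound_all : ∀ᵐ ω ∂P, g ω ≤ n := by
    filter_upwards [hpos_all] with ω hω
    have hSpos : 0 < ∑ j ∈ Finset.range n, Y j ω :=
      Finset.sum_pos (fun j _ => hω j) ⟨0, Finset.mem_range.mpr (by omega)⟩
    apply ciSup_le
    intro i
    have hYle : Y i ω ≤ ∑ j ∈ Finset.range n, Y j ω :=
      Finset.single_le_sum (f := fun j => Y j ω) (fun j _ => (hω j).le)
        (Finset.mem_range.mpr i.isLt)
    have hd : 0 < (1 / n : ℝ) * ∑ j ∈ Finset.range n, Y j ω := by positivity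
    rw [div_le_iff₀ hd]
    calc Y i ω ≤ ∑ j ∈ Finset.range n, Y j ω := hYle
      _ = (n:ℝ) * ((1 / n : ℝ) * ∑ j ∈ Finset.range n, Y j ω) := by
          field_simp
  -- bound on the good set
  have hbound_good : ∀ᵐ ω ∂P, ω ∉ B → g ω ≤ 2 * Ln / μ := by
    filter_upwards [hpos_all] with ω hω hωB
    rw [hBdef, Set.mem_union, not_or] at hωB
    obtain ⟨hωB1, hωB2⟩ := hωB
    have hYle : ∀ i ∈ Finset.range n, Y i ω ≤ Ln := by
      intro i hi
      by_contra hcon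
      exact hωB1 (Set.mem_biUnion hi (by simp [not_le.mp hcon]))
    have hSge : (n:ℝ) * μ / 2 ≤ ∑ j ∈ Finset.range n, Y j ω := not_lt.mp hωB2
    apply ciSup_le
    intro i
    have hd : μ / 2 ≤ (1 / n : ℝ) * ∑ j ∈ Finset.range n, Y j ω := by
      rw [show (μ / 2 : ℝ) = (1/n : ℝ) * ((n:ℝ) * μ / 2) by field_simp]
      exact mul_le_mul_of_nonneg_left hSge (by positivity)
    have hdiv := div_le_div₀ hLn0.le (hYle i (Finset.mem_range.mpr i.isLt))
      (half_pos hmean) hd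
    calc Y i ω / ((1 / n : ℝ) * ∑ j ∈ Finset.range n, Y j ω) ≤ Ln / (μ / 2) := hdiv
      _ = 2 * Ln / μ := by field_simp
  -- split the integral
  have hsplit : ∫⁻ ω, ENNReal.ofReal (g ω) ∂P =
      (∫⁻ ω in B, ENNReal.ofReal (g ω) ∂P) + ∫⁻ ω in Bᶜ, ENNReal.ofReal (g ω) ∂P :=
    (lintegral_add_compl _ hBmeas).symm
  -- bad part
  have hbadpart : ∫⁻ ω in B, ENNReal.ofReal (g ω) ∂P ≤ (n : ℝ≥0∞) * P B := by
    calc ∫⁻ ω in B, ENNReal.ofReal (g ω) ∂P ≤ ∫⁻ _ω in B, ENNReal.ofReal (n:ℝ) ∂P := by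
          apply lintegral_mono_ae
          exact ae_restrict_of_ae (hbound_all.mono fun ω h => ENNReal.ofReal_le_ofReal h)
      _ = ENNReal.ofReal (n:ℝ) * P B := by
          rw [lintegral_const, Measure.restrict_apply_univ]
      _ = (n : ℝ≥0∞) * P B := by rw [ENNReal.ofReal_natCast]
  -- bound n * P B1
  have hPB1 : (n : ℝ≥0∞) * P B1 ≤ ENNReal.ofReal C := by
    have hstep1 : P B1 ≤ ∑ i ∈ Finset.range n, P {ω | Ln < Y i ω} :=
      measure_biUnion_finset_le _ _
    have hstep2 : ∀ i, P {ω | Ln < Y i ω} ≤ ENNReal.ofReal (C * (1/(n:ℝ)) * (1/(n:ℝ))) := by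
      intro i
      have hsub : {ω | Ln < Y i ω} ⊆ {ω | Ln ≤ Y i ω} :=
        Set.setOf_subset_setOf.mpr (fun ω => le_of_lt)
      have hident' : P {ω | Ln ≤ Y i ω} = P {ω | Ln ≤ Y 0 ω} := by
        have := (hident i).measure_mem_eq (s := Set.Ici Ln) measurableSet_Ici
        convert this using 2 <;> · ext ω; simp
      have htail' := htail Ln hLn0.le
      have hval : C * Real.exp (-b * Ln) = C * (1/(n:ℝ)) * (1/(n:ℝ)) := by
        have : -b * Ln = -(Real.log n + Real.log n) := by
          rw [hLndef, hKdef]; field_simp; ring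
        rw [this, Real.exp_neg, Real.exp_add, Real.exp_log hn0]
        field_simp
      calc P {ω | Ln < Y i ω} ≤ P {ω | Ln ≤ Y i ω} := measure_mono hsub
        _ = P {ω | Ln ≤ Y 0 ω} := hident'
        _ ≤ ENNReal.ofReal (C * Real.exp (-b * Ln)) := htail'
        _ = ENNReal.ofReal (C * (1/(n:ℝ)) * (1/(n:ℝ))) := by rw [hval]
    have hsum : ∑ i ∈ Finset.range n, P {ω | Ln < Y i ω} ≤
        (n : ℝ≥0∞) * ENNReal.ofReal (C * (1/(n:ℝ)) * (1/(n:ℝ))) := by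
      calc ∑ i ∈ Finset.range n, P {ω | Ln < Y i ω}
          ≤ ∑ _i ∈ Finset.range n, ENNReal.ofReal (C * (1/(n:ℝ)) * (1/(n:ℝ))) :=
            Finset.sum_le_sum (fun i _ => hstep2 i)
        _ = (n : ℝ≥0∞) * ENNReal.ofReal (C * (1/(n:ℝ)) * (1/(n:ℝ))) := by
            rw [Finset.sum_const, Finset.card_range, nsmul_eq_mul]
    calc (n : ℝ≥0∞) * P B1 ≤ (n : ℝ≥0∞) * ((n : ℝ≥0∞) *
          ENNReal.ofReal (C * (1/(n:ℝ)) * (1/(n:ℝ)))) := by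
          exact mul_le_mul_right (le_trans hstep1 hsum) _
      _ = ENNReal.ofReal ((n:ℝ) * ((n:ℝ) * (C * (1/(n:ℝ)) * (1/(n:ℝ))))) := by
          rw [← ENNReal.ofReal_natCast n, ← ENNReal.ofReal_mul (by positivity),
            ← ENNReal.ofReal_mul (by positivity)]
      _ = ENNReal.ofReal C := by
          congr 1
          field_simp
  -- bound n * P B2 via Chernoff
  have hPB2 : (n : ℝ≥0∞) * P B2 ≤ ENNReal.ofReal (1 / (1 - q)) := by
    have hch := my_chernoff P Y hmeas hindep hident hpos_all s hs0 n ((n:ℝ) * μ / 2)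
    have hsub : B2 ⊆ {ω | (∑ j ∈ Finset.range n, Y j ω) ≤ (n:ℝ) * μ / 2} :=
      Set.setOf_subset_setOf.mpr (fun ω => le_of_lt)
    have hqn : Real.exp (s * ((n:ℝ) * μ / 2)) * ρ ^ n ≤ q ^ n := by
      have hexp : Real.exp (s * ((n:ℝ) * μ / 2)) = Real.exp x ^ n := by
        rw [← Real.exp_nat_mul]
        congr 1
        rw [hxeq]; push_cast; ring
      have hρn : ρ ^ n ≤ (1 - x) ^ n := pow_le_pow_left₀ hρnn hρle n
      calc Real.exp (s * ((n:ℝ) * μ / 2)) * ρ ^ n ≤ Real.exp x ^ n * (1 - x) ^ n := by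
            rw [hexp]
            exact mul_le_mul_of_nonneg_left hρn (by positivity)
        _ = q ^ n := by rw [hqdef, mul_pow]
    have hPB2' : P B2 ≤ ENNReal.ofReal (q ^ n) := by
      rw [ENNReal.le_ofReal_iff_toReal_le (measure_ne_top P B2) (by positivity)]
      calc (P B2).toReal ≤ (P {ω | (∑ j ∈ Finset.range n, Y j ω) ≤ (n:ℝ) * μ / 2}).toReal := by
            apply ENNReal.toReal_mono (measure_ne_top P _) (measure_mono hsub)
        _ ≤ Real.exp (s * ((n:ℝ) * μ / 2)) * ρ ^ n := hch
        _ ≤ q ^ n := hqn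
    calc (n : ℝ≥0∞) * P B2 ≤ (n : ℝ≥0∞) * ENNReal.ofReal (q ^ n) :=
          mul_le_mul_right hPB2' _
      _ = ENNReal.ofReal ((n:ℝ) * q ^ n) := by
          rw [← ENNReal.ofReal_natCast n, ← ENNReal.ofReal_mul (by positivity)]
      _ ≤ ENNReal.ofReal (1 / (1 - q)) := ENNReal.ofReal_le_ofReal (my_nqn hq0 hq1 n)
  -- total bad bound
  have hbad : ∫⁻ ω in B, ENNReal.ofReal (g ω) ∂P ≤ ENNReal.ofReal D := by
    calc ∫⁻ ω in B, ENNReal.ofReal (g ω) ∂P ≤ (n : ℝ≥0∞) * P B := hbadpart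
      _ ≤ (n : ℝ≥0∞) * (P B1 + P B2) := mul_le_mul_right (measure_union_le B1 B2) _
      _ = (n : ℝ≥0∞) * P B1 + (n : ℝ≥0∞) * P B2 := by ring
      _ ≤ ENNReal.ofReal C + ENNReal.ofReal (1 / (1 - q)) := add_le_add hPB1 hPB2
      _ = ENNReal.ofReal D := by
          rw [← ENNReal.ofReal_add hC.le (by positivity), hDdef]
  -- good part
  have hgood : ∫⁻ ω in Bᶜ, ENNReal.ofReal (g ω) ∂P ≤ ENNReal.ofReal (2 * Ln / μ) := by
    calc ∫⁻ ω in Bᶜ, ENNReal.ofReal (g ω) ∂P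
        ≤ ∫⁻ _ω in Bᶜ, ENNReal.ofReal (2 * Ln / μ) ∂P := by
          apply lintegral_mono_ae
          rw [ae_restrict_iff' hBmeas.compl]
          filter_upwards [hbound_good] with ω h hω
          exact ENNReal.ofReal_le_ofReal (h hω)
      _ = ENNReal.ofReal (2 * Ln / μ) * P Bᶜ := by
          rw [lintegral_const, Measure.restrict_apply_univ]
      _ ≤ ENNReal.ofReal (2 * Ln / μ) * 1 := mul_le_mul_right prob_le_one _
      _ = ENNReal.ofReal (2 * Ln / μ) := mul_one _
  -- combine
  have hmain : ∫⁻ ω, ENNReal.ofReal (g ω) ∂P ≤ ENNReal.ofReal (C' * Real.log n) := by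
    rw [hsplit]
    calc (∫⁻ ω in B, ENNReal.ofReal (g ω) ∂P) + ∫⁻ ω in Bᶜ, ENNReal.ofReal (g ω) ∂P
        ≤ ENNReal.ofReal D + ENNReal.ofReal (2 * Ln / μ) := add_le_add hbad hgood
      _ = ENNReal.ofReal (D + 2 * Ln / μ) := by
          rw [← ENNReal.ofReal_add hD0.le (by positivity)]
      _ ≤ ENNReal.ofReal (C' * Real.log n) := by
          apply ENNReal.ofReal_le_ofReal
          rw [hC'def, hLndef]
          have h1 : D ≤ D / Real.log 2 * Real.log n := by
            rw [div_mul_eq_mul_div, le_div_iff₀ hlog2]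
            exact mul_le_mul_of_nonneg_left hlogn hD0.le
          have h2 : 2 * (K * Real.log n) / μ = 2 * K / μ * Real.log n := by ring
          rw [h2]
          linarith [h1]
  refine ⟨hmain, ?_⟩
  have hsqrt : 0 < Real.sqrt n := Real.sqrt_pos.mpr hn0
  rw [ENNReal.ofReal_div_of_pos hsqrt]
  exact ENNReal.div_le_div_right hmain _
end

section
/- Let n ≥ 2 and let (W_1, …, W_n) be an exchangeable random vector of square-integrable real random variables satisfying ∑_{i=1}^n W_i = n almost surely. Let I ⊆ {1, …, n} be a deterministic subset of cardinality m ≥ 1 and let (b_i)_{i∈I} be deterministic real numbers. Then E[(∑_{i∈I} (W_i - 1) b_i)²] = E[(W_1 - 1)²] · (∑_{i∈I} b_i² - (1/(n-1)) ∑_{i,ℓ∈I, i≠ℓ} b_i b_ℓ) ≤ (1 + (m-1)/(n-1)) · E[(W_1 - 1)²] · ∑_{i∈I} b_i² ≤ 2 · E[(W_1 - 1)²] · ∑_{i∈I} b_i². -/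
open MeasureTheory ProbabilityTheory Filter

private lemma exists_perm_pair {n : ℕ} (i l j k : Fin n) (hil : i ≠ l) (hjk : j ≠ k) :
    ∃ σ : Equiv.Perm (Fin n), σ i = j ∧ σ l = k := by
  set l' := Equiv.swap i j l with hl'
  refine ⟨(Equiv.swap l' k) * (Equiv.swap i j), ?_, ?_⟩
  · simp only [Equiv.Perm.mul_apply, Equiv.swap_apply_left]
    have h1 : j ≠ l' := by
      intro h
      rcases eq_or_ne l i with rfl | hne
      · exact hil rfl
      · rcases eq_or_ne l j with rfl | hne2
        · rw [hl', Equiv.swap_apply_right] at h; exact hne h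
        · rw [hl', Equiv.swap_apply_of_ne_of_ne hne hne2] at h; exact hne2 h.symm
    exact Equiv.swap_apply_of_ne_of_ne h1 hjk
  · simp only [Equiv.Perm.mul_apply, ← hl', Equiv.swap_apply_left]

/-- If `(W_1, …, W_n)` is an exchangeable vector of square-integrable
random variables with `∑_i W_i = n` almost surely, `I ⊆ {1, …, n}` has cardinality
`m ≥ 1`, and `(b_i)_{i ∈ I}` are reals, then
`E[(∑_{i∈I} (W_i - 1) b_i)²]
  = E[(W_1 - 1)²] (∑_{i∈I} b_i² - (1/(n-1)) ∑_{i≠ℓ∈I} b_i b_ℓ)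
  ≤ (1 + (m-1)/(n-1)) E[(W_1 - 1)²] ∑_{i∈I} b_i²
  ≤ 2 E[(W_1 - 1)²] ∑_{i∈I} b_i²`. -/
theorem stmt_13 {Ω : Type*} [MeasurableSpace Ω] (μ : Measure Ω) [IsProbabilityMeasure μ]
    (n : ℕ) (hn : 2 ≤ n) (W : Fin n → Ω → ℝ)
    (hmeas : ∀ i, Measurable (W i))
    (hL2 : ∀ i, MemLp (W i) 2 μ)
    (hexch : ∀ σ : Equiv.Perm (Fin n),
      Measure.map (fun ω => fun i => W (σ i) ω) μ = Measure.map (fun ω => fun i => W i ω) μ)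
    (hsum : ∀ᵐ ω ∂μ, ∑ i, W i ω = n)
    (I : Finset (Fin n)) (m : ℕ) (hm : I.card = m) (hm1 : 1 ≤ m) (b : Fin n → ℝ) :
    (∫ ω, (∑ i ∈ I, (W i ω - 1) * b i) ^ 2 ∂μ =
      (∫ ω, (W (⟨0, by omega⟩ : Fin n) ω - 1) ^ 2 ∂μ) *
        (∑ i ∈ I, b i ^ 2 - (1 / ((n : ℝ) - 1)) * ∑ i ∈ I, ∑ l ∈ I \ {i}, b i * b l)) ∧
    ((∫ ω, (W (⟨0, by omega⟩ : Fin n) ω - 1) ^ 2 ∂μ) *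
        (∑ i ∈ I, b i ^ 2 - (1 / ((n : ℝ) - 1)) * ∑ i ∈ I, ∑ l ∈ I \ {i}, b i * b l) ≤
      (1 + ((m : ℝ) - 1) / ((n : ℝ) - 1)) *
        (∫ ω, (W (⟨0, by omega⟩ : Fin n) ω - 1) ^ 2 ∂μ) * ∑ i ∈ I, b i ^ 2) ∧
    ((1 + ((m : ℝ) - 1) / ((n : ℝ) - 1)) *
        (∫ ω, (W (⟨0, by omega⟩ : Fin n) ω - 1) ^ 2 ∂μ) * ∑ i ∈ I, b i ^ 2 ≤
      2 * (∫ ω, (W (⟨0, by omega⟩ : Fin n) ω - 1) ^ 2 ∂μ) * ∑ i ∈ I, b i ^ 2) := by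
  set i0 : Fin n := ⟨0, by omega⟩ with hi0
  set i1 : Fin n := ⟨1, by omega⟩ with hi1
  have hi01 : i0 ≠ i1 := by simp [hi0, hi1, Fin.ext_iff]
  have hn1 : (0:ℝ) < (n:ℝ) - 1 := by
    have : (2:ℝ) ≤ (n:ℝ) := by exact_mod_cast hn
    linarith
  -- square integrability of W i - 1
  have hz2 : ∀ i, MemLp (fun ω => W i ω - 1) 2 μ := fun i => (hL2 i).sub (memLp_const 1)
  -- integrability of products
  have hint : ∀ i l, Integrable (fun ω => (W i ω - 1) * (W l ω - 1)) μ := by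
    intro i l
    rw [← memLp_one_iff_integrable]
    have := (hz2 l).smul (p := 2) (q := 2) (r := 1) (hz2 i)
    simpa [smul_eq_mul, Pi.mul_def] using this
  -- exchangeability transfers covariances
  have hperm : ∀ (σ : Equiv.Perm (Fin n)) (j k : Fin n),
      ∫ ω, (W (σ j) ω - 1) * (W (σ k) ω - 1) ∂μ = ∫ ω, (W j ω - 1) * (W k ω - 1) ∂μ := by
    intro σ j k
    have hf : Measurable (fun x : Fin n → ℝ => (x j - 1) * (x k - 1)) :=
      ((measurable_pi_apply j).sub measurable_const).mul
        ((measurable_pi_apply k).sub measurable_const)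
    have h1 : Measurable (fun ω => fun i => W (σ i) ω) :=
      measurable_pi_lambda _ fun i => hmeas (σ i)
    have h2 : Measurable (fun ω => fun i => W i ω) :=
      measurable_pi_lambda _ fun i => hmeas i
    calc ∫ ω, (W (σ j) ω - 1) * (W (σ k) ω - 1) ∂μ
        = ∫ x, (x j - 1) * (x k - 1) ∂(Measure.map (fun ω => fun i => W (σ i) ω) μ) := by
          rw [integral_map h1.aemeasurable hf.aestronglyMeasurable]
      _ = ∫ x, (x j - 1) * (x k - 1) ∂(Measure.map (fun ω => fun i => W i ω) μ) := by
          rw [hexch]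
      _ = ∫ ω, (W j ω - 1) * (W k ω - 1) ∂μ := by
          rw [integral_map h2.aemeasurable hf.aestronglyMeasurable]
  set v : ℝ := ∫ ω, (W i0 ω - 1) * (W i0 ω - 1) ∂μ with hv_def
  set c : ℝ := ∫ ω, (W i0 ω - 1) * (W i1 ω - 1) ∂μ with hc_def
  have hvar : ∀ i, ∫ ω, (W i ω - 1) * (W i ω - 1) ∂μ = v := by
    intro i
    have := hperm (Equiv.swap i0 i) i0 i0
    rw [Equiv.swap_apply_left] at this
    rw [this]
  have hcov : ∀ i l, i ≠ l → ∫ ω, (W i ω - 1) * (W l ω - 1) ∂μ = c := by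
    intro i l hil
    obtain ⟨σ, hσ1, hσ2⟩ := exists_perm_pair i0 i1 i l hi01 hil
    have := hperm σ i0 i1
    rw [hσ1, hσ2] at this
    rw [this, hc_def]
  -- v ≥ 0
  have hv0 : 0 ≤ v := integral_nonneg fun ω => mul_self_nonneg _
  -- relation between v and c from the sum constraint
  have hvc : v + ((n:ℝ) - 1) * c = 0 := by
    have h0 : ∫ ω, (∑ i, (W i ω - 1)) * (W i0 ω - 1) ∂μ = 0 := by
      apply integral_eq_zero_of_ae
      filter_upwards [hsum] with ω hω
      have : ∑ i, (W i ω - 1) = 0 := by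
        rw [Finset.sum_sub_distrib, hω]
        simp
      simp [this]
    have h1 : ∫ ω, (∑ i, (W i ω - 1)) * (W i0 ω - 1) ∂μ
        = ∑ i, ∫ ω, (W i ω - 1) * (W i0 ω - 1) ∂μ := by
      rw [← integral_finset_sum _ (fun i _ => hint i i0)]
      congr 1
      ext ω
      rw [Finset.sum_mul]
    have h2 : ∑ i, ∫ ω, (W i ω - 1) * (W i0 ω - 1) ∂μ = v + ((n:ℝ) - 1) * c := by
      rw [Finset.sum_eq_sum_sdiff_singleton_add (Finset.mem_univ i0)]
      rw [hvar i0]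
      have : ∑ i ∈ Finset.univ \ {i0}, ∫ ω, (W i ω - 1) * (W i0 ω - 1) ∂μ
          = ∑ i ∈ Finset.univ \ {i0}, c := by
        apply Finset.sum_congr rfl
        intro i hi
        have hii0 : i ≠ i0 := by
          simp only [Finset.mem_sdiff, Finset.mem_singleton] at hi
          exact hi.2
        exact hcov i i0 hii0
      rw [this, Finset.sum_const]
      have hcard : (Finset.univ \ {i0} : Finset (Fin n)).card = n - 1 := by
        rw [Finset.card_sdiff_of_subset (by simp)]
        simp
      rw [hcard]
      have : ((n - 1 : ℕ) : ℝ) = (n:ℝ) - 1 := by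
        have : 1 ≤ n := by omega
        push_cast [this]
        ring
      rw [nsmul_eq_mul, this]
      ring
    rw [h1, h2] at h0
    exact h0
  have hc' : c = -(1 / ((n:ℝ) - 1)) * v := by
    field_simp
    linarith
  -- rewrite target integral of square
  have hv2 : ∫ ω, (W i0 ω - 1) ^ 2 ∂μ = v := by
    rw [hv_def]
    congr 1
    ext ω
    ring
  -- main expansion
  have hmain : ∫ ω, (∑ i ∈ I, (W i ω - 1) * b i) ^ 2 ∂μ
      = v * (∑ i ∈ I, b i ^ 2) + c * (∑ i ∈ I, ∑ l ∈ I \ {i}, b i * b l) := by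
    have hexp : ∀ ω, (∑ i ∈ I, (W i ω - 1) * b i) ^ 2
        = ∑ i ∈ I, ∑ l ∈ I, ((W i ω - 1) * (W l ω - 1)) * (b i * b l) := by
      intro ω
      rw [pow_two, Finset.sum_mul_sum]
      apply Finset.sum_congr rfl
      intro i _
      apply Finset.sum_congr rfl
      intro l _
      ring
    simp_rw [hexp]
    rw [integral_finset_sum _ (fun i _ => integrable_finset_sum _
      (fun l _ => (hint i l).mul_const _))]
    have : ∀ i ∈ I, ∫ ω, ∑ l ∈ I, ((W i ω - 1) * (W l ω - 1)) * (b i * b l) ∂μ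
        = v * b i ^ 2 + ∑ l ∈ I \ {i}, c * (b i * b l) := by
      intro i hi
      rw [integral_finset_sum _ (fun l _ => (hint i l).mul_const _)]
      have heach : ∀ l, ∫ ω, ((W i ω - 1) * (W l ω - 1)) * (b i * b l) ∂μ
          = (∫ ω, (W i ω - 1) * (W l ω - 1) ∂μ) * (b i * b l) := fun l =>
        integral_mul_const _ _
      simp_rw [heach]
      rw [Finset.sum_eq_sum_sdiff_singleton_add hi]
      rw [hvar i]
      have : ∑ l ∈ I \ {i}, (∫ ω, (W i ω - 1) * (W l ω - 1) ∂μ) * (b i * b l)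
          = ∑ l ∈ I \ {i}, c * (b i * b l) := by
        apply Finset.sum_congr rfl
        intro l hl
        have hil : i ≠ l := by
          simp only [Finset.mem_sdiff, Finset.mem_singleton] at hl
          exact fun h => hl.2 h.symm
        rw [hcov i l hil]
      rw [this]
      ring
    rw [Finset.sum_congr rfl this, Finset.sum_add_distrib, ← Finset.mul_sum]
    congr 1
    rw [Finset.mul_sum]
    apply Finset.sum_congr rfl
    intro i _
    rw [Finset.mul_sum]
  set S : ℝ := ∑ i ∈ I, b i ^ 2 with hS_def
  set T : ℝ := ∑ i ∈ I, ∑ l ∈ I \ {i}, b i * b l with hT_def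
  set P : ℝ := ∑ i ∈ I, b i with hP_def
  have hS0 : 0 ≤ S := Finset.sum_nonneg fun i _ => sq_nonneg _
  have hPT : P ^ 2 = T + S := by
    rw [hP_def, pow_two, Finset.sum_mul_sum, hT_def, hS_def]
    rw [← Finset.sum_add_distrib]
    apply Finset.sum_congr rfl
    intro i hi
    rw [Finset.sum_eq_sum_sdiff_singleton_add hi]
    ring
  -- first conjunct
  have heq : ∫ ω, (∑ i ∈ I, (W i ω - 1) * b i) ^ 2 ∂μ
      = v * (S - (1 / ((n:ℝ) - 1)) * T) := by
    rw [hmain, hc']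
    ring
  refine ⟨by rw [heq, hv2], ?_, ?_⟩
  · -- second conjunct
    rw [hv2]
    have hkey : S - P ^ 2 ≤ ((m:ℝ) - 1) * S := by
      rcases eq_or_lt_of_le hm1 with h1 | h2
      · -- m = 1
        obtain ⟨a, ha⟩ := Finset.card_eq_one.mp (by omega : I.card = 1)
        subst ha
        simp [hS_def, hP_def, ← h1]
      · -- m ≥ 2
        have hm2 : (2:ℝ) ≤ (m:ℝ) := by exact_mod_cast h2
        nlinarith [sq_nonneg P, hS0]
    have hmulkey : v * (1 / ((n:ℝ) - 1)) * (S - P ^ 2)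
        ≤ v * (1 / ((n:ℝ) - 1)) * (((m:ℝ) - 1) * S) :=
      mul_le_mul_of_nonneg_left hkey (by positivity)
    have hTval : T = P ^ 2 - S := by linarith
    calc v * (S - (1 / ((n:ℝ) - 1)) * T)
        = v * S + v * (1 / ((n:ℝ) - 1)) * (S - P ^ 2) := by rw [hTval]; ring
      _ ≤ v * S + v * (1 / ((n:ℝ) - 1)) * (((m:ℝ) - 1) * S) := by linarith
      _ = (1 + ((m:ℝ) - 1) / ((n:ℝ) - 1)) * v * S := by
          field_simp
  · -- third conjunct
    rw [hv2]
    have hmn : m ≤ n := by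
      rw [← hm]
      simpa using Finset.card_le_univ I
    have hcoef : 1 + ((m:ℝ) - 1) / ((n:ℝ) - 1) ≤ 2 := by
      have hmn' : (m:ℝ) ≤ (n:ℝ) := by exact_mod_cast hmn
      have h1 : ((m:ℝ) - 1) / ((n:ℝ) - 1) ≤ 1 := (div_le_one hn1).mpr (by linarith)
      linarith
    have := mul_le_mul_of_nonneg_right
      (mul_le_mul_of_nonneg_right hcoef hv0) hS0
    linarith [this]
end

section
/- For each n ≥ 1, let W_{n,1}, …, W_{n,n} be nonnegative identically distributed random variables on a common probability space (no independence is assumed). Suppose that lim_{t_0 → ∞} limsup_{n → ∞} sup_{t ≥ t_0} t² P(W_{n,1} ≥ t) = 0. Then n^{-1/2} E[max_{1≤i≤n} W_{n,i}] → 0 as n → ∞. -/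
open MeasureTheory ProbabilityTheory ENNReal Filter


lemma tail_int {T : ℝ} (hT : 0 < T) :
    ∫⁻ t in Set.Ioi T, (ENNReal.ofReal (t ^ 2))⁻¹ = ENNReal.ofReal T⁻¹ := by
  have h1 : ∀ t ∈ Set.Ioi T, ENNReal.ofReal (t ^ (-2 : ℝ)) = (ENNReal.ofReal (t ^ 2))⁻¹ := by
    intro t ht
    have ht0 : 0 < t := hT.trans ht
    rw [← ENNReal.ofReal_inv_of_pos (by positivity)]
    congr 1
    rw [show (-2 : ℝ) = -((2:ℕ):ℝ) by norm_num, Real.rpow_neg ht0.le, Real.rpow_natCast]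
  rw [← setLIntegral_congr_fun measurableSet_Ioi h1,
    ← ofReal_integral_eq_lintegral_ofReal (integrableOn_Ioi_rpow_of_lt (by norm_num) hT)
      ((ae_restrict_iff' measurableSet_Ioi).mpr (Filter.Eventually.of_forall
        (fun t ht => Real.rpow_nonneg (hT.trans ht).le _)))]
  congr 1
  rw [integral_Ioi_rpow_of_lt (by norm_num) hT]
  norm_num [Real.rpow_neg_one]

lemma key_est {Ω : Type*} [MeasurableSpace Ω] (μ : Measure Ω) [IsProbabilityMeasure μ]
    {n : ℕ} (hn : 0 < n) (W : Fin n → Ω → ℝ) (hmeas : ∀ i, Measurable (W i))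
    (hnonneg : ∀ i ω, 0 ≤ W i ω)
    (hident : ∀ i j, IdentDistrib (W i) (W j) μ μ)
    {T : ℝ} (hT : 0 < T) :
    (∫⁻ ω, ENNReal.ofReal (⨆ i, W i ω) ∂μ) ≤
      ENNReal.ofReal T +
        (n : ℝ≥0∞) * (⨆ t ∈ Set.Ici T, ENNReal.ofReal (t ^ 2) * μ {ω | t ≤ W ⟨0, hn⟩ ω}) *
          (ENNReal.ofReal T)⁻¹ := by
  haveI : Nonempty (Fin n) := ⟨⟨0, hn⟩⟩
  set S := ⨆ t ∈ Set.Ici T, ENNReal.ofReal (t ^ 2) * μ {ω | t ≤ W ⟨0, hn⟩ ω} with hS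
  set f : Ω → ℝ := fun ω => ⨆ i, W i ω with hf
  have f_mble : Measurable f := Measurable.iSup hmeas
  -- union bound
  have hub : ∀ t : ℝ, μ {ω | t ≤ f ω} ≤ (n : ℝ≥0∞) * μ {ω | t ≤ W ⟨0, hn⟩ ω} := by
    intro t
    have hsub : {ω | t ≤ f ω} ⊆ ⋃ i, {ω | t ≤ W i ω} := by
      intro ω hω
      obtain ⟨i, hi⟩ := exists_eq_ciSup_of_finite (f := fun i => W i ω)
      exact Set.mem_iUnion.2 ⟨i, by simpa [hf] using hω.trans_eq hi.symm⟩
    calc μ {ω | t ≤ f ω} ≤ μ (⋃ i, {ω | t ≤ W i ω}) := measure_mono hsub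
      _ ≤ ∑ i : Fin n, μ {ω | t ≤ W i ω} := measure_iUnion_fintype_le μ _
      _ = ∑ _i : Fin n, μ {ω | t ≤ W ⟨0, hn⟩ ω} := by
          refine Finset.sum_congr rfl fun i _ => ?_
          exact (hident i ⟨0, hn⟩).measure_mem_eq measurableSet_Ici
      _ = (n : ℝ≥0∞) * μ {ω | t ≤ W ⟨0, hn⟩ ω} := by
          simp [Finset.sum_const, nsmul_eq_mul]
  -- tail bound
  have htail : ∀ t ∈ Set.Ioi T, μ {ω | t ≤ W ⟨0, hn⟩ ω} ≤ S * (ENNReal.ofReal (t ^ 2))⁻¹ := by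
    intro t ht
    have ht0 : 0 < t := hT.trans ht
    have h1 : ENNReal.ofReal (t ^ 2) * μ {ω | t ≤ W ⟨0, hn⟩ ω} ≤ S :=
      le_biSup (fun t => ENNReal.ofReal (t ^ 2) * μ {ω | t ≤ W ⟨0, hn⟩ ω}) (Set.mem_Ici.mpr (le_of_lt ht))
    have h2 : ENNReal.ofReal (t ^ 2) ≠ 0 := by
      simp [ENNReal.ofReal_eq_zero]; positivity
    rw [← div_eq_mul_inv, ENNReal.le_div_iff_mul_le (Or.inl h2) (Or.inl ofReal_ne_top)]
    rwa [mul_comm]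
  have f_nn : 0 ≤ᵐ[μ] f := Filter.Eventually.of_forall fun ω =>
    le_ciSup_of_le (Set.Finite.bddAbove (Set.finite_range _)) ⟨0, hn⟩ (hnonneg _ _)
  calc (∫⁻ ω, ENNReal.ofReal (f ω) ∂μ)
      = ∫⁻ t in Set.Ioi 0, μ {a | t ≤ f a} :=
        lintegral_eq_lintegral_meas_le μ f_nn f_mble.aemeasurable
    _ = (∫⁻ t in Set.Ioc 0 T, μ {a | t ≤ f a}) + ∫⁻ t in Set.Ioi T, μ {a | t ≤ f a} := by
        rw [← lintegral_union measurableSet_Ioi (Set.Ioc_disjoint_Ioi le_rfl),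
          Set.Ioc_union_Ioi_eq_Ioi hT.le]
    _ ≤ ENNReal.ofReal T + (n : ℝ≥0∞) * S * (ENNReal.ofReal T)⁻¹ := by
        gcongr ?_ + ?_
        · calc (∫⁻ t in Set.Ioc 0 T, μ {a | t ≤ f a}) ≤ ∫⁻ _t in Set.Ioc 0 T, 1 :=
              lintegral_mono fun t => prob_le_one
            _ = ENNReal.ofReal T := by simp [Real.volume_Ioc]
        · calc (∫⁻ t in Set.Ioi T, μ {a | t ≤ f a})
              ≤ ∫⁻ t in Set.Ioi T, (n : ℝ≥0∞) * S * (ENNReal.ofReal (t ^ 2))⁻¹ := by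
                refine setLIntegral_mono' measurableSet_Ioi fun t ht => ?_
                calc μ {a | t ≤ f a} ≤ (n : ℝ≥0∞) * μ {ω | t ≤ W ⟨0, hn⟩ ω} := hub t
                  _ ≤ (n : ℝ≥0∞) * (S * (ENNReal.ofReal (t ^ 2))⁻¹) := by
                      gcongr; exact htail t ht
                  _ = (n : ℝ≥0∞) * S * (ENNReal.ofReal (t ^ 2))⁻¹ := by ring
            _ = (n : ℝ≥0∞) * S * ∫⁻ t in Set.Ioi T, (ENNReal.ofReal (t ^ 2))⁻¹ := by
                rw [lintegral_const_mul]
                exact ((measurable_id.pow_const 2).ennreal_ofReal).inv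
            _ = (n : ℝ≥0∞) * S * (ENNReal.ofReal T)⁻¹ := by
                rw [tail_int hT, ENNReal.ofReal_inv_of_pos hT]


/-- Triangular array of nonnegative, rowwise identically distributed
(possibly dependent) weights `W_{n,1}, …, W_{n,n}`.  If
`lim_{t₀→∞} limsup_{n→∞} sup_{t ≥ t₀} t² P(W_{n,1} ≥ t) = 0`, then
`n^{-1/2} E[max_{i ≤ n} W_{n,i}] → 0`. -/
theorem stmt_15 {Ω : ℕ → Type*} [∀ n, MeasurableSpace (Ω n)]
    (μ : ∀ n, Measure (Ω n)) [∀ n, IsProbabilityMeasure (μ n)]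
    (W : ∀ n, Fin n → Ω n → ℝ)
    (hmeas : ∀ n i, Measurable (W n i))
    (hnonneg : ∀ n i ω, 0 ≤ W n i ω)
    (hident : ∀ n (i j : Fin n), IdentDistrib (W n i) (W n j) (μ n) (μ n))
    (hcond : Tendsto (fun t0 : ℝ =>
        Filter.limsup (fun n : ℕ =>
            ⨆ t ∈ Set.Ici t0, ENNReal.ofReal (t ^ 2) *
              μ (n + 1) {ω | t ≤ W (n + 1) ⟨0, Nat.succ_pos n⟩ ω})
          atTop) atTop (nhds 0)) :
    Tendsto (fun n : ℕ =>
        (∫⁻ ω, ENNReal.ofReal (⨆ i : Fin n, W n i ω) ∂(μ n)) / ENNReal.ofReal (Real.sqrt n))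
      atTop (nhds 0) := by
  rw [← Filter.tendsto_add_atTop_iff_nat 1]
  rw [ENNReal.tendsto_nhds_zero]
  intro ε hε
  obtain ⟨η, hη, h2η⟩ : ∃ η : ℝ, 0 < η ∧ ENNReal.ofReal (2 * η) ≤ ε := by
    rcases eq_or_ne ε ⊤ with h | h
    · exact ⟨1, one_pos, by simp [h]⟩
    · have hεt : 0 < ε.toReal := ENNReal.toReal_pos hε.ne' h
      refine ⟨ε.toReal / 4, by positivity, ?_⟩
      rw [show (2:ℝ) * (ε.toReal / 4) = ε.toReal / 2 by ring]
      calc ENNReal.ofReal (ε.toReal / 2) ≤ ENNReal.ofReal ε.toReal := by gcongr; linarith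
        _ = ε := ENNReal.ofReal_toReal h
  have hpos : (0:ℝ≥0∞) < ENNReal.ofReal (η ^ 2) := ENNReal.ofReal_pos.mpr (by positivity)
  obtain ⟨t₀, ht₀⟩ := (hcond.eventually_lt_const hpos).exists
  have hS : ∀ᶠ n in atTop, (⨆ t ∈ Set.Ici t₀, ENNReal.ofReal (t ^ 2) *
      μ (n + 1) {ω | t ≤ W (n + 1) ⟨0, Nat.succ_pos n⟩ ω}) < ENNReal.ofReal (η ^ 2) :=
    eventually_lt_of_limsup_lt ht₀
  have hN : ∀ᶠ n : ℕ in atTop, t₀ ≤ η * Real.sqrt (n + 1) := by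
    filter_upwards [(tendsto_natCast_atTop_atTop (R := ℝ)).eventually_ge_atTop ((t₀ / η) ^ 2)]
      with n hn
    have h1 : t₀ / η ≤ Real.sqrt ((n : ℝ) + 1) := by
      calc t₀ / η ≤ |t₀ / η| := le_abs_self _
        _ = Real.sqrt ((t₀ / η) ^ 2) := (Real.sqrt_sq_eq_abs _).symm
        _ ≤ Real.sqrt ((n : ℝ) + 1) := Real.sqrt_le_sqrt (by linarith)
    calc t₀ = η * (t₀ / η) := by field_simp
      _ ≤ η * Real.sqrt ((n : ℝ) + 1) := by gcongr
  filter_upwards [hS, hN] with n hSn hNn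
  have hmR : (0:ℝ) < ((n + 1 : ℕ) : ℝ) := by positivity
  have hm : (0:ℝ) < Real.sqrt ((n + 1 : ℕ) : ℝ) := Real.sqrt_pos.mpr hmR
  have hmm : (((n + 1 : ℕ)) : ℝ) = Real.sqrt ((n + 1 : ℕ) : ℝ) * Real.sqrt ((n + 1 : ℕ) : ℝ) :=
    (Real.mul_self_sqrt hmR.le).symm
  set T : ℝ := η * Real.sqrt ((n + 1 : ℕ) : ℝ) with hTdef
  have hT : 0 < T := by positivity
  have hNn' : t₀ ≤ T := by rw [hTdef]; convert hNn using 3; push_cast; ring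
  have key := key_est (μ (n + 1)) (Nat.succ_pos n) (W (n + 1)) (hmeas (n + 1))
    (hnonneg (n + 1)) (hident (n + 1)) hT
  have hmono : (⨆ t ∈ Set.Ici T, ENNReal.ofReal (t ^ 2) *
        μ (n + 1) {ω | t ≤ W (n + 1) ⟨0, Nat.succ_pos n⟩ ω}) ≤
      ⨆ t ∈ Set.Ici t₀, ENNReal.ofReal (t ^ 2) *
        μ (n + 1) {ω | t ≤ W (n + 1) ⟨0, Nat.succ_pos n⟩ ω} :=
    biSup_mono fun t ht => le_trans hNn' ht
  have hcalc : ((n + 1 : ℕ) : ℝ≥0∞) * ENNReal.ofReal (η ^ 2) * (ENNReal.ofReal T)⁻¹ =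
      ENNReal.ofReal T := by
    rw [← ENNReal.ofReal_natCast, ← ENNReal.ofReal_inv_of_pos hT,
      ← ENNReal.ofReal_mul (by positivity), ← ENNReal.ofReal_mul (by positivity)]
    congr 1
    rw [hTdef, hmm]
    field_simp
    rw [Real.sqrt_sq hm.le]
  have hE : (∫⁻ ω, ENNReal.ofReal (⨆ i : Fin (n + 1), W (n + 1) i ω) ∂(μ (n + 1))) ≤
      ENNReal.ofReal (2 * η) * ENNReal.ofReal (Real.sqrt ((n + 1 : ℕ) : ℝ)) := by
    calc (∫⁻ ω, ENNReal.ofReal (⨆ i : Fin (n + 1), W (n + 1) i ω) ∂(μ (n + 1)))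
        ≤ ENNReal.ofReal T + ((n + 1 : ℕ) : ℝ≥0∞) *
            (⨆ t ∈ Set.Ici T, ENNReal.ofReal (t ^ 2) *
              μ (n + 1) {ω | t ≤ W (n + 1) ⟨0, Nat.succ_pos n⟩ ω}) * (ENNReal.ofReal T)⁻¹ := key
      _ ≤ ENNReal.ofReal T + ((n + 1 : ℕ) : ℝ≥0∞) * ENNReal.ofReal (η ^ 2) *
            (ENNReal.ofReal T)⁻¹ := by gcongr; exact hmono.trans hSn.le
      _ = ENNReal.ofReal T + ENNReal.ofReal T := by rw [hcalc]
      _ = ENNReal.ofReal (2 * η) * ENNReal.ofReal (Real.sqrt ((n + 1 : ℕ) : ℝ)) := by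
          rw [← ENNReal.ofReal_add hT.le hT.le, ← ENNReal.ofReal_mul (by positivity)]
          congr 1
          rw [hTdef]; ring
  exact le_trans (ENNReal.div_le_of_le_mul hE) h2η
end

section
/- Let (Ω_X, 𝒜_X, μ) and (Ω_W, 𝒜_W, ν) be probability spaces and, for each n ≥ 1, let Q_n, V_n : Ω_X × Ω_W → ℝ be measurable with respect to the product σ-algebra. Let F : ℝ → [0,1] be a continuous cumulative distribution function. Suppose that (i) the random variables x ↦ sup_{t∈ℝ} |ν({w : Q_n(x,w) ≤ t}) − F(t)| converge to 0 in μ-probability, and (ii) for every ε > 0 and δ > 0, μ({x : ν({w : |V_n(x,w)| > ε}) > δ}) → 0 as n → ∞. Then the random variables x ↦ sup_{t∈ℝ} |ν({w : Q_n(x,w) + V_n(x,w) ≤ t}) − F(t)| also converge to 0 in μ-probability. -/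
open MeasureTheory ENNReal Filter

private lemma arctan_lip : LipschitzWith 1 Real.arctan :=
  lipschitzWith_of_nnnorm_deriv_le Real.differentiable_arctan (fun x => by
    rw [Real.deriv_arctan, ← NNReal.coe_le_coe]
    simp only [coe_nnnorm, NNReal.coe_one, Real.norm_eq_abs]
    rw [abs_of_nonneg (by positivity), div_le_one (by positivity)]
    nlinarith [sq_nonneg x])

private lemma unif_mod (F : ℝ → ℝ) (hF_cont : Continuous F)
    (hF_bot : Tendsto F atBot (nhds 0)) (hF_top : Tendsto F atTop (nhds 1))
    {e : ℝ} (he : 0 < e) :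
    ∃ η > (0:ℝ), ∀ s t : ℝ, |s - t| ≤ η → |F s - F t| ≤ e := by
  set h : ℝ → ℝ := fun t => 1/2 + Real.arctan t / Real.pi with hh
  have huch : UniformContinuous h := by
    have h1 : UniformContinuous fun t => Real.arctan t / Real.pi :=
      (arctan_lip.uniformContinuous).div_const' _
    exact uniformContinuous_const.add h1
  have hbot : Tendsto h atBot (nhds 0) := by
    have : Tendsto Real.arctan atBot (nhds (-(Real.pi/2))) :=
      Real.tendsto_arctan_atBot.mono_right nhdsWithin_le_nhds
    have := (tendsto_const_nhds (x := (1:ℝ)/2)).add (this.div_const Real.pi)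
    simpa [hh, neg_div, div_div_cancel_left', Real.pi_ne_zero] using this
  have htop : Tendsto h atTop (nhds 1) := by
    have : Tendsto Real.arctan atTop (nhds (Real.pi/2)) :=
      Real.tendsto_arctan_atTop.mono_right nhdsWithin_le_nhds
    have := (tendsto_const_nhds (x := (1:ℝ)/2)).add (this.div_const Real.pi)
    have h2 : (1:ℝ)/2 + Real.pi/2/Real.pi = 1 := by
      field_simp
      ring
    rw [h2] at this
    exact this
  have hucG : UniformContinuous fun t => F t - h t := by
    apply Continuous.uniformContinuous_of_tendsto_cocompact
      (hF_cont.sub (huch.continuous)) (x := 0)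
    rw [cocompact_eq_atBot_atTop, tendsto_sup]
    constructor
    · have := hF_bot.sub hbot; rw [sub_zero] at this; exact this
    · have := hF_top.sub htop; rw [sub_self] at this; exact this
  have hucF : UniformContinuous F := by
    have := hucG.add huch
    simpa using this
  rw [Metric.uniformContinuous_iff] at hucF
  obtain ⟨δ, hδ, hδ'⟩ := hucF e he
  refine ⟨δ/2, by positivity, fun s t hst => ?_⟩
  have : dist s t < δ := by
    rw [Real.dist_eq]; linarith
  exact (hδ' this).le

/-- Transition of stochastic orders for bootstrap distributions:
if the conditional (bootstrap) distribution functions of `Q_n` converge uniformly to a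
continuous cdf `F` in `μ`-probability, and `V_n → 0` conditionally in `ν`-probability,
in `μ`-probability, then the conditional distribution functions of `Q_n + V_n` also
converge uniformly to `F` in `μ`-probability. -/
theorem stmt_19 {ΩX ΩW : Type*} [MeasurableSpace ΩX] [MeasurableSpace ΩW]
    (μ : Measure ΩX) (ν : Measure ΩW) [IsProbabilityMeasure μ] [IsProbabilityMeasure ν]
    (Q V : ℕ → ΩX × ΩW → ℝ) (hQ : ∀ n, Measurable (Q n)) (hV : ∀ n, Measurable (V n))
    (F : ℝ → ℝ) (hF_cont : Continuous F) (hF_mono : Monotone F)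
    (hF_bot : Tendsto F atBot (nhds 0)) (hF_top : Tendsto F atTop (nhds 1))
    (hQF : ∀ ε : ℝ, 0 < ε →
      Tendsto (fun n : ℕ =>
          μ {x | ε < ⨆ t : ℝ, |(ν {w | Q n (x, w) ≤ t}).toReal - F t|})
        atTop (nhds 0))
    (hVsmall : ∀ ε : ℝ, 0 < ε → ∀ δ : ℝ, 0 < δ →
      Tendsto (fun n : ℕ =>
          μ {x | ENNReal.ofReal δ < ν {w | ε < |V n (x, w)|}}) atTop (nhds 0)) :
    ∀ ε : ℝ, 0 < ε →
      Tendsto (fun n : ℕ =>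
          μ {x | ε < ⨆ t : ℝ, |(ν {w | Q n (x, w) + V n (x, w) ≤ t}).toReal - F t|})
        atTop (nhds 0) := by
  have hF0 : ∀ t, 0 ≤ F t := fun t =>
    le_of_tendsto hF_bot (eventually_atBot.2 ⟨t, fun s hs => hF_mono hs⟩)
  have hF1 : ∀ t, F t ≤ 1 := fun t =>
    ge_of_tendsto hF_top (eventually_atTop.2 ⟨t, fun s hs => hF_mono hs⟩)
  intro ε hε
  obtain ⟨η, hη, hmod⟩ := unif_mod F hF_cont hF_bot hF_top (e := ε/4) (by positivity)
  have hbdd : ∀ (n : ℕ) (x : ΩX),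
      BddAbove (Set.range fun t : ℝ => |(ν {w | Q n (x, w) ≤ t}).toReal - F t|) := by
    intro n x
    refine ⟨1, ?_⟩
    rintro _ ⟨t, rfl⟩
    have h1 : (ν {w | Q n (x, w) ≤ t}).toReal ≤ 1 := by
      have hle : ν {w | Q n (x, w) ≤ t} ≤ 1 := prob_le_one
      have := ENNReal.toReal_mono one_ne_top hle
      simpa using this
    have h0 : (0:ℝ) ≤ (ν {w | Q n (x, w) ≤ t}).toReal := ENNReal.toReal_nonneg
    rw [abs_le]
    constructor <;> nlinarith [hF0 t, hF1 t]
  have key : ∀ n : ℕ,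
      {x | ε < ⨆ t : ℝ, |(ν {w | Q n (x, w) + V n (x, w) ≤ t}).toReal - F t|} ⊆
      {x | ε/4 < ⨆ t : ℝ, |(ν {w | Q n (x, w) ≤ t}).toReal - F t|} ∪
      {x | ENNReal.ofReal (ε/4) < ν {w | η < |V n (x, w)|}} := by
    intro n x hx
    by_contra hcon
    rw [Set.mem_union] at hcon
    push_neg at hcon
    simp only [Set.mem_setOf_eq, not_lt] at hcon hx
    obtain ⟨hD, hE⟩ := hcon
    have hE' : (ν {w | η < |V n (x, w)|}).toReal ≤ ε/4 :=
      ENNReal.toReal_le_of_le_ofReal (by positivity) hE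
    have hS : (⨆ t : ℝ, |(ν {w | Q n (x, w) + V n (x, w) ≤ t}).toReal - F t|)
        ≤ ε/4 + ε/4 + ε/4 := by
      apply ciSup_le
      intro t
      have hAB : {w | Q n (x, w) + V n (x, w) ≤ t} ⊆
          {w | Q n (x, w) ≤ t + η} ∪ {w | η < |V n (x, w)|} := by
        intro w hw
        by_cases hv : η < |V n (x, w)|
        · exact Or.inr hv
        · left
          push_neg at hv
          have := abs_le.1 hv
          simp only [Set.mem_setOf_eq] at hw ⊢
          linarith [this.1]
      have hBA : {w | Q n (x, w) ≤ t - η} ⊆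
          {w | Q n (x, w) + V n (x, w) ≤ t} ∪ {w | η < |V n (x, w)|} := by
        intro w hw
        by_cases hv : η < |V n (x, w)|
        · exact Or.inr hv
        · left
          push_neg at hv
          have := abs_le.1 hv
          simp only [Set.mem_setOf_eq] at hw ⊢
          linarith [this.1]
      have m1 := (measure_mono (μ := ν) hAB).trans (measure_union_le _ _)
      have m2 := (measure_mono (μ := ν) hBA).trans (measure_union_le _ _)
      have r1 : (ν {w | Q n (x, w) + V n (x, w) ≤ t}).toReal ≤
          (ν {w | Q n (x, w) ≤ t + η}).toReal + (ν {w | η < |V n (x, w)|}).toReal := by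
        have := ENNReal.toReal_mono
          (ENNReal.add_ne_top.2 ⟨measure_ne_top ν _, measure_ne_top ν _⟩) m1
        rwa [ENNReal.toReal_add (measure_ne_top ν _) (measure_ne_top ν _)] at this
      have r2 : (ν {w | Q n (x, w) ≤ t - η}).toReal ≤
          (ν {w | Q n (x, w) + V n (x, w) ≤ t}).toReal + (ν {w | η < |V n (x, w)|}).toReal := by
        have := ENNReal.toReal_mono
          (ENNReal.add_ne_top.2 ⟨measure_ne_top ν _, measure_ne_top ν _⟩) m2
        rwa [ENNReal.toReal_add (measure_ne_top ν _) (measure_ne_top ν _)] at this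
      have dBp : |(ν {w | Q n (x, w) ≤ t + η}).toReal - F (t + η)| ≤ ε/4 :=
        (le_ciSup (hbdd n x) (t + η)).trans hD
      have dBm : |(ν {w | Q n (x, w) ≤ t - η}).toReal - F (t - η)| ≤ ε/4 :=
        (le_ciSup (hbdd n x) (t - η)).trans hD
      have f1 : |F (t + η) - F t| ≤ ε/4 := hmod _ _ (by
        rw [add_sub_cancel_left, abs_of_nonneg hη.le])
      have f2 : |F t - F (t - η)| ≤ ε/4 := hmod _ _ (by
        rw [_root_.sub_sub_cancel, abs_of_nonneg hη.le])
      have a1 := abs_le.1 dBp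
      have a2 := abs_le.1 dBm
      have a3 := abs_le.1 f1
      have a4 := abs_le.1 f2
      rw [abs_sub_le_iff]
      constructor <;> linarith [hE', a1.1, a1.2, a2.1, a2.2, a3.1, a3.2, a4.1, a4.2]
    linarith
  have h1 := hQF (ε/4) (by positivity)
  have h2 := hVsmall η hη (ε/4) (by positivity)
  have hsum : Tendsto (fun n : ℕ =>
      μ {x | ε/4 < ⨆ t : ℝ, |(ν {w | Q n (x, w) ≤ t}).toReal - F t|} +
      μ {x | ENNReal.ofReal (ε/4) < ν {w | η < |V n (x, w)|}}) atTop (nhds 0) := by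
    have := h1.add h2
    simpa using this
  refine tendsto_of_tendsto_of_tendsto_of_le_of_le tendsto_const_nhds hsum
    (fun n => zero_le) (fun n => ?_)
  exact (measure_mono (key n)).trans (measure_union_le _ _)
end
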